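/- arXiv:2106.15913 — 9 statements merged into one kernel-verified Lean document; each statement's English description precedes it below -/
import Mathlib

section
/- Let φ : ℝ → ℝ be monotone non-decreasing and odd (φ(−x) = −φ(x) for all x), and define F(σ) = ∫₀^σ φ(x) dx. Then for all σ₁, σ₂ ∈ ℝ, (σ₁ + σ₂) φ(σ₁) ≥ F(σ₁) − F(σ₂). -/
open MeasureTheory

theorem convex_gradient_inequality_odd (φ : ℝ → ℝ)
    (hmono : ∀ x y : ℝ, (φ x - φ y) * (x - y) ≥ 0)
    (hodd : ∀ x : ℝ, φ (-x) = -φ x)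
    (F : ℝ → ℝ) (hF : ∀ σ : ℝ, F σ = ∫ x in (0:ℝ)..σ, φ x) :
    ∀ σ₁ σ₂ : ℝ, (σ₁ + σ₂) * φ σ₁ ≥ F σ₁ - F σ₂ := by
  have hm : Monotone φ := by
    intro x y hxy
    rcases eq_or_lt_of_le hxy with h | h
    · simp [h]
    · have := hmono y x
      nlinarith [this]
  have hint : ∀ a b : ℝ, IntervalIntegrable φ volume a b := fun a b =>
    hm.intervalIntegrable
  -- F is even
  have hFeven : ∀ σ : ℝ, F (-σ) = F σ := by
    intro σ
    rw [hF, hF]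
    have : (∫ x in (0:ℝ)..σ, φ (-x)) = ∫ x in (-σ)..(0:ℝ), φ x := by
      simpa using intervalIntegral.integral_comp_neg (a := 0) (b := σ) φ
    calc (∫ x in (0:ℝ)..(-σ), φ x) = -∫ x in (-σ)..(0:ℝ), φ x := by
          rw [intervalIntegral.integral_symm]
      _ = -∫ x in (0:ℝ)..σ, φ (-x) := by rw [this]
      _ = ∫ x in (0:ℝ)..σ, φ x := by simp [hodd]
  -- gradient inequality: F σ₁ - F t ≤ (σ₁ - t) * φ σ₁
  have key : ∀ σ₁ t : ℝ, F σ₁ - F t ≤ (σ₁ - t) * φ σ₁ := by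
    intro σ₁ t
    have hsplit : F σ₁ - F t = ∫ x in t..σ₁, φ x := by
      rw [hF, hF, ← intervalIntegral.integral_interval_sub_left (hint 0 σ₁) (hint 0 t)]
    rw [hsplit]
    rcases le_total t σ₁ with h | h
    · have hle : (∫ x in t..σ₁, φ x) ≤ ∫ x in t..σ₁, φ σ₁ := by
        apply intervalIntegral.integral_mono_on h (hint t σ₁) intervalIntegrable_const
        intro x hx
        exact hm hx.2
      simpa [mul_comm] using hle
    · rw [intervalIntegral.integral_symm]
      have hge : (∫ x in σ₁..t, φ σ₁) ≤ ∫ x in σ₁..t, φ x := by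
        apply intervalIntegral.integral_mono_on h intervalIntegrable_const (hint σ₁ t)
        intro x hx
        exact hm hx.1
      have : (t - σ₁) * φ σ₁ ≤ ∫ x in σ₁..t, φ x := by simpa [mul_comm] using hge
      linarith
  intro σ₁ σ₂
  have := key σ₁ (-σ₂)
  rw [hFeven σ₂] at this
  linarith
end

section
/- (Area Lemma, monotone case.) Let φ : ℝ → ℝ be monotone non-decreasing with φ(0) = 0 and |φ(σ)| ≤ γ|σ| for all σ ∈ ℝ, for some γ > 0. Let x : ℝ → ℝ be measurable and square-integrable over ℝ (x ∈ L²(ℝ)). Then for every τ ∈ ℝ, ∫_{−∞}^{∞} x(t) φ(x(t)) dt ≥ ∫_{−∞}^{∞} x(t − τ) φ(x(t)) dt. -/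
open MeasureTheory

theorem area_lemma_monotone (φ : ℝ → ℝ)
    (hmono : ∀ x y : ℝ, (φ x - φ y) * (x - y) ≥ 0)
    (hzero : φ 0 = 0)
    (γ : ℝ) (hγ : γ > 0)
    (hbound : ∀ σ : ℝ, |φ σ| ≤ γ * |σ|)
    (x : ℝ → ℝ) (hx_meas : Measurable x)
    (hx : MemLp x 2 (volume : Measure ℝ)) :
    ∀ τ : ℝ, (∫ t : ℝ, x t * φ (x t)) ≥ ∫ t : ℝ, x (t - τ) * φ (x t) := by
  intro τ
  have hm : Monotone φ := by
    intro a b hab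
    rcases hab.eq_or_lt with h | h
    · simp [h]
    · nlinarith [hmono b a]
  have hφmeas : Measurable φ := hm.measurable
  have hint : ∀ a b : ℝ, IntervalIntegrable φ volume a b := fun a b =>
    hm.intervalIntegrable
  set Φ : ℝ → ℝ := fun u => ∫ s in (0:ℝ)..u, φ s with hΦdef
  have hΦcont : Continuous Φ := intervalIntegral.continuous_primitive hint 0
  -- key pointwise inequality: b * φ a ≤ a * φ a + Φ b - Φ a
  have hkey : ∀ a b : ℝ, b * φ a ≤ a * φ a + Φ b - Φ a := by
    intro a b
    have hsub : Φ b - Φ a = ∫ s in a..b, φ s :=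
      intervalIntegral.integral_interval_sub_left (hint 0 b) (hint 0 a)
    have hge : (b - a) * φ a ≤ ∫ s in a..b, φ s := by
      rcases le_total a b with hab | hba
      · have := intervalIntegral.integral_mono_on hab
          (intervalIntegrable_const (c := φ a)) (hint a b)
          (fun s hs => hm hs.1)
        simpa using this
      · rw [intervalIntegral.integral_symm]
        have := intervalIntegral.integral_mono_on hba (hint b a)
          (intervalIntegrable_const (c := φ a))
          (fun s hs => hm hs.2)
        have h2 : (∫ s in b..a, φ s) ≤ (a - b) * φ a := by simpa using this
        linarith
    nlinarith [hsub, hge]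
  -- bound on Φ
  have hΦbound : ∀ u : ℝ, |Φ u| ≤ γ * u ^ 2 := by
    intro u
    have : ‖∫ s in (0:ℝ)..u, φ s‖ ≤ γ * |u| * |u - 0| := by
      apply intervalIntegral.norm_integral_le_of_norm_le_const
      intro s hs
      have hs' : |s| ≤ |u| := by
        rcases le_or_gt 0 u with h | h
        · rw [Set.uIoc_of_le h] at hs
          rw [abs_of_pos hs.1, abs_of_nonneg h]; exact hs.2
        · rw [Set.uIoc_of_ge h.le] at hs
          rw [abs_of_nonpos hs.2, abs_of_neg h]; linarith [hs.1]
      calc ‖φ s‖ ≤ γ * |s| := hbound s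
        _ ≤ γ * |u| := by nlinarith
    calc |Φ u| ≤ γ * |u| * |u - 0| := by simpa using this
      _ = γ * u ^ 2 := by rw [sub_zero, mul_assoc, abs_mul_abs_self, ← sq]
  -- translated function
  set y : ℝ → ℝ := fun t => x (t - τ) with hydef
  have hy_meas : Measurable y := hx_meas.comp (measurable_id.sub measurable_const)
  have hy : MemLp y 2 (volume : Measure ℝ) :=
    hx.comp_measurePreserving (measurePreserving_sub_right volume τ)
  have hx2 : Integrable (fun t => x t ^ 2) volume := hx.integrable_sq
  have hy2 : Integrable (fun t => y t ^ 2) volume := hy.integrable_sq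
  -- integrability of x t * φ (x t)
  have h2 : Integrable (fun t => x t * φ (x t)) volume := by
    apply Integrable.mono' (hx2.const_mul γ)
      ((hx_meas.mul (hφmeas.comp hx_meas)).aestronglyMeasurable)
    filter_upwards with t
    calc ‖x t * φ (x t)‖ = |x t| * |φ (x t)| := abs_mul _ _
      _ ≤ |x t| * (γ * |x t|) := by
          exact mul_le_mul_of_nonneg_left (hbound (x t)) (abs_nonneg _)
      _ = γ * x t ^ 2 := by rw [mul_comm, mul_assoc, abs_mul_abs_self, ← sq]
  -- integrability of y t * φ (x t)
  have h1 : Integrable (fun t => y t * φ (x t)) volume := by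
    apply Integrable.mono' (((hy2.add hx2).const_mul γ))
      ((hy_meas.mul (hφmeas.comp hx_meas)).aestronglyMeasurable)
    filter_upwards with t
    have h' : |φ (x t)| ≤ γ * |x t| := hbound (x t)
    calc ‖y t * φ (x t)‖ = |y t| * |φ (x t)| := abs_mul _ _
      _ ≤ |y t| * (γ * |x t|) := mul_le_mul_of_nonneg_left h' (abs_nonneg _)
      _ ≤ γ * (y t ^ 2 + x t ^ 2) := by nlinarith [sq_abs (y t), sq_abs (x t), sq_nonneg (|y t| - |x t|), abs_nonneg (y t), abs_nonneg (x t)]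
  -- integrability of Φ ∘ x and Φ ∘ y
  have h3 : Integrable (fun t => Φ (y t)) volume := by
    apply Integrable.mono' (hy2.const_mul γ)
      (hΦcont.measurable.comp hy_meas).aestronglyMeasurable
    filter_upwards with t
    simpa using hΦbound (y t)
  have h4 : Integrable (fun t => Φ (x t)) volume := by
    apply Integrable.mono' (hx2.const_mul γ)
      (hΦcont.measurable.comp hx_meas).aestronglyMeasurable
    filter_upwards with t
    simpa using hΦbound (x t)
  have htrans : (∫ t : ℝ, Φ (y t)) = ∫ t : ℝ, Φ (x t) :=
    integral_sub_right_eq_self (fun t => Φ (x t)) τ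
  have hcalc : (∫ t : ℝ, y t * φ (x t)) ≤
      ∫ t : ℝ, (x t * φ (x t) + Φ (y t) - Φ (x t)) := by
    apply integral_mono h1 ((h2.add h3).sub h4)
    intro t
    exact hkey (x t) (y t)
  rw [ge_iff_le]
  calc (∫ t : ℝ, x (t - τ) * φ (x t)) = ∫ t : ℝ, y t * φ (x t) := rfl
    _ ≤ ∫ t : ℝ, (x t * φ (x t) + Φ (y t) - Φ (x t)) := hcalc
    _ = (∫ t : ℝ, x t * φ (x t)) + (∫ t : ℝ, Φ (y t)) - ∫ t : ℝ, Φ (x t) := by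
        have h23 : Integrable (fun t => x t * φ (x t) + Φ (y t)) volume := h2.add h3
        rw [integral_sub h23 h4, integral_add h2 h3]
    _ = ∫ t : ℝ, x t * φ (x t) := by rw [htrans]; ring
end

section
/- (Area Lemma, odd case.) Let φ : ℝ → ℝ be monotone non-decreasing and odd with φ(0) = 0 and |φ(σ)| ≤ γ|σ| for all σ ∈ ℝ, for some γ > 0. Let x : ℝ → ℝ be measurable and square-integrable over ℝ. Then for every τ ∈ ℝ, |∫_{−∞}^{∞} x(t − τ) φ(x(t)) dt| ≤ ∫_{−∞}^{∞} x(t) φ(x(t)) dt. -/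
open MeasureTheory intervalIntegral

theorem area_lemma_odd (φ : ℝ → ℝ)
    (hmono : ∀ x y : ℝ, (φ x - φ y) * (x - y) ≥ 0)
    (hodd : ∀ x : ℝ, φ (-x) = -φ x)
    (hzero : φ 0 = 0)
    (γ : ℝ) (hγ : γ > 0)
    (hbound : ∀ σ : ℝ, |φ σ| ≤ γ * |σ|)
    (x : ℝ → ℝ) (hx_meas : Measurable x)
    (hx : MemLp x 2 (volume : Measure ℝ)) :
    ∀ τ : ℝ, |∫ t : ℝ, x (t - τ) * φ (x t)| ≤ ∫ t : ℝ, x t * φ (x t) := by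
  intro τ
  -- φ is monotone
  have hm : Monotone φ := by
    intro a b hab
    rcases eq_or_lt_of_le hab with rfl | h
    · exact le_rfl
    · nlinarith [hmono a b]
  have hφint : ∀ a b : ℝ, IntervalIntegrable φ volume a b := fun a b =>
    (hm.monotoneOn _).intervalIntegrable
  -- primitive of φ
  set Φ : ℝ → ℝ := fun a => ∫ s in (0:ℝ)..a, φ s with hΦ
  -- key pointwise inequality: a * φ b ≤ Φ a + (b * φ b - Φ b)
  have key : ∀ a b : ℝ, a * φ b ≤ Φ a + (b * φ b - Φ b) := by
    intro a b
    have hdiff : Φ a - Φ b = ∫ s in b..a, φ s := by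
      rw [hΦ]
      simp only
      rw [← intervalIntegral.integral_add_adjacent_intervals (hφint 0 b) (hφint b a)]
      ring_nf
    have hge : (a - b) * φ b ≤ Φ a - Φ b := by
      rw [hdiff]
      rcases le_total b a with hba | hab
      · have : ∫ s in b..a, φ b ≤ ∫ s in b..a, φ s :=
          intervalIntegral.integral_mono_on hba (intervalIntegrable_const) (hφint b a)
            (fun s hs => hm hs.1)
        simpa using this
      · have : ∫ s in a..b, φ s ≤ ∫ s in a..b, φ b :=
          intervalIntegral.integral_mono_on hab (hφint a b) (intervalIntegrable_const)
            (fun s hs => hm hs.2)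
        have h2 : ∫ s in b..a, φ s = -∫ s in a..b, φ s := intervalIntegral.integral_symm a b
        rw [h2]
        simp at this ⊢
        nlinarith [this]
    nlinarith [hge]
  -- Φ is even
  have heven : ∀ a : ℝ, Φ (-a) = Φ a := by
    intro a
    have h1 : (∫ s in (0:ℝ)..a, φ (-s)) = ∫ s in (-a)..(0:ℝ), φ s := by
      simp
    have h2 : (∫ s in (0:ℝ)..a, φ (-s)) = -Φ a := by
      simp_rw [hodd]
      rw [intervalIntegral.integral_neg]
    have h3 : (∫ s in (-a)..(0:ℝ), φ s) = -Φ (-a) := intervalIntegral.integral_symm 0 (-a)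
    rw [h2, h3] at h1
    linarith
  -- bounds on Φ
  have hΦ0 : Φ 0 = 0 := by simp [hΦ]
  have hΦnonneg : ∀ a : ℝ, 0 ≤ Φ a := by
    intro a
    have := key a 0
    simp [hzero, hΦ0] at this
    linarith
  have hΦle : ∀ a : ℝ, Φ a ≤ γ * a ^ 2 := by
    intro a
    have h1 := key 0 a
    simp [hzero, hΦ0] at h1
    have h2 : a * φ a ≤ γ * a ^ 2 := by
      calc a * φ a ≤ |a * φ a| := le_abs_self _
        _ = |a| * |φ a| := abs_mul a (φ a)
        _ ≤ |a| * (γ * |a|) := by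
            exact mul_le_mul_of_nonneg_left (hbound a) (abs_nonneg a)
        _ = γ * (|a| * |a|) := by ring
        _ = γ * a ^ 2 := by rw [abs_mul_abs_self]; ring
    linarith
  -- nonnegativity of t*φ t
  have hself : ∀ a : ℝ, 0 ≤ a * φ a := by
    intro a
    have := hmono a 0
    simp [hzero] at this
    nlinarith [this]
  -- measurability
  have hφmeas : Measurable φ := hm.measurable
  have hΦcont : Continuous Φ := intervalIntegral.continuous_primitive hφint 0
  -- integrability facts
  have hx2 : Integrable (fun t => x t ^ 2) volume := hx.integrable_sq
  have hxτ_meas : Measurable (fun t => x (t - τ)) :=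
    hx_meas.comp (measurable_id.sub_const τ)
  have hx2τ : Integrable (fun t => x (t - τ) ^ 2) volume :=
    hx2.comp_sub_right τ
  have hg : Integrable (fun t => x t * φ (x t)) volume := by
    refine Integrable.mono' (hx2.const_mul γ) ?_ ?_
    · exact ((hx_meas.mul (hφmeas.comp hx_meas)).aestronglyMeasurable)
    · refine Filter.Eventually.of_forall fun t => ?_
      rw [Real.norm_eq_abs, abs_of_nonneg (hself (x t))]
      calc x t * φ (x t) ≤ |x t * φ (x t)| := le_abs_self _
        _ = |x t| * |φ (x t)| := abs_mul _ _
        _ ≤ |x t| * (γ * |x t|) := mul_le_mul_of_nonneg_left (hbound (x t)) (abs_nonneg _)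
        _ = γ * (|x t| * |x t|) := by ring
        _ = γ * x t ^ 2 := by rw [abs_mul_abs_self]; ring
  have hh : Integrable (fun t => x (t - τ) * φ (x t)) volume := by
    refine Integrable.mono' (((hx2τ.add hx2).const_mul (γ/2))) ?_ ?_
    · exact (hxτ_meas.mul (hφmeas.comp hx_meas)).aestronglyMeasurable
    · refine Filter.Eventually.of_forall fun t => ?_
      rw [Real.norm_eq_abs]
      have h1 : |x (t - τ) * φ (x t)| ≤ γ * (|x (t - τ)| * |x t|) := by
        rw [abs_mul]
        calc |x (t - τ)| * |φ (x t)| ≤ |x (t - τ)| * (γ * |x t|) :=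
              mul_le_mul_of_nonneg_left (hbound (x t)) (abs_nonneg _)
          _ = γ * (|x (t - τ)| * |x t|) := by ring
      have h2 : |x (t - τ)| * |x t| ≤ (x (t - τ) ^ 2 + x t ^ 2) / 2 := by
        nlinarith [sq_nonneg (|x (t - τ)| - |x t|), sq_abs (x (t - τ)), sq_abs (x t)]
      calc |x (t - τ) * φ (x t)| ≤ γ * ((x (t - τ) ^ 2 + x t ^ 2) / 2) := by nlinarith
        _ = γ / 2 * (x (t - τ) ^ 2 + x t ^ 2) := by ring
  have hΦx : Integrable (fun t => Φ (x t)) volume := by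
    refine Integrable.mono' (hx2.const_mul γ) ?_ ?_
    · exact (hΦcont.measurable.comp hx_meas).aestronglyMeasurable
    · exact Filter.Eventually.of_forall fun t => by
        rw [Real.norm_eq_abs, abs_of_nonneg (hΦnonneg _)]; exact hΦle _
  have hΦxτ : Integrable (fun t => Φ (x (t - τ))) volume := hΦx.comp_sub_right τ
  have hgs : Integrable (fun t => x t * φ (x t) - Φ (x t)) volume := hg.sub hΦx
  -- translation invariance
  have htrans : (∫ t : ℝ, Φ (x (t - τ))) = ∫ t : ℝ, Φ (x t) :=
    integral_sub_right_eq_self (fun t => Φ (x t)) τ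
  -- upper bound
  have hupper : (∫ t : ℝ, x (t - τ) * φ (x t)) ≤ ∫ t : ℝ, x t * φ (x t) := by
    have hmono_int : (∫ t : ℝ, x (t - τ) * φ (x t)) ≤
        ∫ t : ℝ, (Φ (x (t - τ)) + (x t * φ (x t) - Φ (x t))) := by
      refine integral_mono hh (hΦxτ.add hgs) fun t => key _ _
    rw [integral_add hΦxτ hgs, integral_sub hg hΦx, htrans] at hmono_int
    linarith
  -- lower bound
  have hlower : -(∫ t : ℝ, x (t - τ) * φ (x t)) ≤ ∫ t : ℝ, x t * φ (x t) := by
    have hneg : Integrable (fun t => -(x (t - τ) * φ (x t))) volume := hh.neg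
    have hmono_int : (∫ t : ℝ, -(x (t - τ) * φ (x t))) ≤
        ∫ t : ℝ, (Φ (x (t - τ)) + (x t * φ (x t) - Φ (x t))) := by
      refine integral_mono hneg (hΦxτ.add hgs) fun t => ?_
      have := key (-(x (t - τ))) (x t)
      rw [heven] at this
      linarith [this]
    rw [integral_add hΦxτ hgs, integral_sub hg hΦx, htrans] at hmono_int
    rw [MeasureTheory.integral_neg] at hmono_int
    linarith
  exact abs_le.mpr ⟨by linarith, hupper⟩
end

section
/- Let φ : ℝ → ℝ be monotone non-decreasing with φ(0) = 0 and |φ(σ)| ≤ γ|σ| for all σ ∈ ℝ, for some γ > 0. Let x : ℝ → ℝ be measurable and square-integrable over ℝ, and let h : ℝ → ℝ be integrable with h(t) ≥ 0 for all t. Then ∫_{−∞}^{∞} (x(t) − (h ⋆ x)(t)) φ(x(t)) dt ≥ (1 − ∫_{−∞}^{∞} |h(τ)| dτ) · ∫_{−∞}^{∞} x(t) φ(x(t)) dt, where (h ⋆ x)(t) = ∫_{−∞}^{∞} h(τ) x(t − τ) dτ denotes convolution. -/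
open MeasureTheory

theorem zames_falb_bound_monotone (φ : ℝ → ℝ)
    (hmono : ∀ x y : ℝ, (φ x - φ y) * (x - y) ≥ 0)
    (hzero : φ 0 = 0)
    (γ : ℝ) (hγ : γ > 0)
    (hbound : ∀ σ : ℝ, |φ σ| ≤ γ * |σ|)
    (x : ℝ → ℝ) (hx_meas : Measurable x)
    (hx : MemLp x 2 (volume : Measure ℝ))
    (h : ℝ → ℝ) (hh_int : Integrable h (volume : Measure ℝ))
    (hh_pos : ∀ t : ℝ, h t ≥ 0) :
    (∫ t : ℝ, (x t - ∫ τ : ℝ, h τ * x (t - τ)) * φ (x t)) ≥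
      (1 - ∫ τ : ℝ, |h τ|) * ∫ t : ℝ, x t * φ (x t) := by
  -- φ is monotone
  have hφm : Monotone φ := by
    intro a b hab
    rcases eq_or_lt_of_le hab with rfl | hlt
    · exact le_refl _
    · nlinarith [hmono b a]
  have hφmeas : Measurable φ := hφm.measurable
  have hφx_meas : Measurable fun t => φ (x t) := hφmeas.comp hx_meas
  have hx2 : Integrable (fun t => x t ^ 2) volume := hx.integrable_sq
  -- pointwise bound |a * φ b| ≤ γ/2 * (a^2 + b^2)
  have hptb : ∀ a b : ℝ, |a * φ b| ≤ γ / 2 * (a ^ 2 + b ^ 2) := by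
    intro a b
    have h1 := hbound b
    have h2 : |a * φ b| = |a| * |φ b| := abs_mul _ _
    nlinarith [abs_nonneg a, abs_nonneg (φ b), abs_nonneg b, sq_abs a, sq_abs b,
      sq_nonneg (|a| - |b|), mul_le_mul_of_nonneg_left h1 (abs_nonneg a)]
  -- integrability of x * φ ∘ x
  have hxφ : Integrable (fun t => x t * φ (x t)) volume := by
    refine Integrable.mono (hx2.add hx2 |>.const_mul (γ / 2))
      ((hx_meas.mul hφx_meas).aestronglyMeasurable) ?_
    filter_upwards with t
    rw [Real.norm_eq_abs, Real.norm_eq_abs]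
    calc |x t * φ (x t)| ≤ γ / 2 * (x t ^ 2 + x t ^ 2) := hptb _ _
      _ ≤ |γ / 2 * (x t ^ 2 + x t ^ 2)| := le_abs_self _
  -- the potential Φ
  set Φ : ℝ → ℝ := fun σ => ∫ s in (0:ℝ)..σ, φ s with hΦdef
  have hΦcont : Continuous Φ :=
    intervalIntegral.continuous_primitive (fun a b => hφm.intervalIntegrable) 0
  -- key convexity inequality
  have hkey : ∀ a b : ℝ, φ a * (b - a) ≤ Φ b - Φ a := by
    intro a b
    have hab : Φ b - Φ a = ∫ s in a..b, φ s := by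
      rw [hΦdef]
      exact intervalIntegral.integral_interval_sub_left
        (hφm.intervalIntegrable) (hφm.intervalIntegrable)
    rw [hab]
    rcases le_total a b with hle | hle
    · have : ∫ s in a..b, φ a ≤ ∫ s in a..b, φ s := by
        refine intervalIntegral.integral_mono_on hle
          intervalIntegrable_const hφm.intervalIntegrable ?_
        intro s hs
        exact hφm hs.1
      rw [intervalIntegral.integral_const, smul_eq_mul] at this
      linarith [this]
    · have : ∫ s in b..a, φ s ≤ ∫ s in b..a, φ a := by
        refine intervalIntegral.integral_mono_on hle
          hφm.intervalIntegrable intervalIntegrable_const ?_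
        intro s hs
        exact hφm hs.2
      rw [intervalIntegral.integral_const, smul_eq_mul] at this
      rw [intervalIntegral.integral_symm b a]
      nlinarith [this]
  have hΦ0 : Φ 0 = 0 := by simp [hΦdef]
  have hΦnonneg : ∀ σ : ℝ, 0 ≤ Φ σ := by
    intro σ
    have := hkey 0 σ
    rw [hzero, hΦ0] at this
    linarith
  have hΦle : ∀ σ : ℝ, Φ σ ≤ γ / 2 * σ ^ 2 := by
    intro σ
    rcases le_total 0 σ with hσ | hσ
    · have hb : ∀ s ∈ Set.Icc (0:ℝ) σ, φ s ≤ γ * s := by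
        intro s hs
        have := hbound s
        have h1 : |s| = s := abs_of_nonneg hs.1
        calc φ s ≤ |φ s| := le_abs_self _
          _ ≤ γ * |s| := this
          _ = γ * s := by rw [h1]
      have h2 : Φ σ ≤ ∫ s in (0:ℝ)..σ, γ * s := by
        refine intervalIntegral.integral_mono_on hσ hφm.intervalIntegrable
          (Continuous.intervalIntegrable (by continuity) _ _) hb
      have h3 : (∫ s in (0:ℝ)..σ, γ * s) = γ * (σ ^ 2 / 2) := by
        rw [intervalIntegral.integral_const_mul, integral_id]
        ring
      rw [h3] at h2
      linarith
    · have hb : ∀ s ∈ Set.Icc σ (0:ℝ), γ * s ≤ φ s := by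
        intro s hs
        have hbs := hbound s
        have h1 : |s| = -s := abs_of_nonpos hs.2
        have h2 : -φ s ≤ |φ s| := neg_le_abs _
        rw [h1] at hbs
        linarith
      have h2 : (∫ s in σ..(0:ℝ), γ * s) ≤ ∫ s in σ..(0:ℝ), φ s := by
        refine intervalIntegral.integral_mono_on hσ
          (Continuous.intervalIntegrable (by continuity) _ _) hφm.intervalIntegrable hb
      have h3 : (∫ s in σ..(0:ℝ), γ * s) = -(γ * (σ ^ 2 / 2)) := by
        rw [intervalIntegral.integral_const_mul, integral_id]
        ring
      have h4 : Φ σ = -∫ s in σ..(0:ℝ), φ s := by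
        rw [hΦdef]
        exact (intervalIntegral.integral_symm _ _).trans rfl
      rw [h3] at h2
      rw [h4]
      linarith
  -- |Φ σ| ≤ γ/2 σ²
  have hΦabs : ∀ σ : ℝ, |Φ σ| ≤ γ / 2 * σ ^ 2 := by
    intro σ
    rw [abs_of_nonneg (hΦnonneg σ)]
    have := hΦle σ
    linarith
  -- integrability of Φ ∘ x
  have hΦint : Integrable (fun t => Φ (x t)) volume := by
    refine Integrable.mono (hx2.const_mul (γ / 2))
      ((hΦcont.measurable.comp hx_meas).aestronglyMeasurable) ?_
    filter_upwards with t
    rw [Real.norm_eq_abs, Real.norm_eq_abs]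
    exact (hΦabs (x t)).trans (le_abs_self _)
  -- integrability of t ↦ x (t - τ) * φ (x t), for each τ
  have hx2τ : ∀ τ : ℝ, Integrable (fun t => x (t - τ) ^ 2) volume := fun τ =>
    (hx2.comp_sub_right τ)
  have hprod : ∀ τ : ℝ, Integrable (fun t => x (t - τ) * φ (x t)) volume := by
    intro τ
    refine Integrable.mono (((hx2τ τ).add hx2).const_mul (γ / 2))
      (((hx_meas.comp (measurable_id.sub measurable_const)).mul
        hφx_meas).aestronglyMeasurable) ?_
    filter_upwards with t
    rw [Real.norm_eq_abs, Real.norm_eq_abs]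
    exact (hptb _ _).trans (le_abs_self _)
  set I : ℝ := ∫ t : ℝ, x t * φ (x t) with hIdef
  set C : ℝ := ∫ t : ℝ, x t ^ 2 with hCdef
  -- translation invariance facts
  have hshiftΦ : ∀ τ : ℝ, ∫ t : ℝ, Φ (x (t - τ)) = ∫ t : ℝ, Φ (x t) := fun τ =>
    integral_sub_right_eq_self (fun t => Φ (x t)) τ
  have hshiftx2 : ∀ τ : ℝ, ∫ t : ℝ, x (t - τ) ^ 2 = C := fun τ =>
    integral_sub_right_eq_self (fun t => x t ^ 2) τ
  -- the key per-shift bound: ∫ x(t-τ) φ(x t) dt ≤ I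
  have hgle : ∀ τ : ℝ, (∫ t : ℝ, x (t - τ) * φ (x t)) ≤ I := by
    intro τ
    have hptw : ∀ t : ℝ, x (t - τ) * φ (x t) ≤
        x t * φ (x t) - Φ (x t) + Φ (x (t - τ)) := by
      intro t
      have := hkey (x t) (x (t - τ))
      nlinarith [this]
    have hsub : Integrable (fun t => x t * φ (x t) - Φ (x t)) volume := hxφ.sub hΦint
    have hrhs : Integrable (fun t => x t * φ (x t) - Φ (x t) + Φ (x (t - τ))) volume :=
      hsub.add (hΦint.comp_sub_right τ)
    have h1 : (∫ t : ℝ, x (t - τ) * φ (x t)) ≤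
        ∫ t : ℝ, (x t * φ (x t) - Φ (x t) + Φ (x (t - τ))) :=
      integral_mono (hprod τ) hrhs hptw
    have h2 : (∫ t : ℝ, (x t * φ (x t) - Φ (x t) + Φ (x (t - τ)))) = I := by
      rw [integral_add hsub (hΦint.comp_sub_right τ),
        integral_sub hxφ hΦint, hshiftΦ τ]
      ring
    linarith
  -- joint integrability of F (τ, t) = h τ * (x (t - τ) * φ (x t))
  set F : ℝ × ℝ → ℝ := fun p => h p.1 * (x (p.2 - p.1) * φ (x p.2)) with hFdef
  have hF_aesm : AEStronglyMeasurable F ((volume : Measure ℝ).prod volume) := by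
    refine AEStronglyMeasurable.mul (hh_int.aestronglyMeasurable.comp_fst) ?_
    exact (((hx_meas.comp (measurable_snd.sub measurable_fst)).mul
      (hφx_meas.comp measurable_snd)).aestronglyMeasurable)
  have hFτ : ∀ τ : ℝ, Integrable (fun t => F (τ, t)) volume := fun τ =>
    (hprod τ).const_mul (h τ)
  have hFint : Integrable F ((volume : Measure ℝ).prod volume) := by
    rw [integrable_prod_iff hF_aesm]
    constructor
    · exact Filter.Eventually.of_forall hFτ
    · refine Integrable.mono (hh_int.norm.const_mul (γ * C))
        (hF_aesm.norm.integral_prod_right') ?_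
      filter_upwards with τ
      have hnorm_int : (∫ t : ℝ, ‖F (τ, t)‖) =
          |h τ| * (∫ t : ℝ, |x (t - τ) * φ (x t)|) := by
        simp_rw [hFdef, Real.norm_eq_abs, abs_mul]
        rw [integral_const_mul]
      have hle1 : (∫ t : ℝ, |x (t - τ) * φ (x t)|) ≤
          ∫ t : ℝ, γ / 2 * (x (t - τ) ^ 2 + x t ^ 2) := by
        refine integral_mono (hprod τ).abs (((hx2τ τ).add hx2).const_mul (γ / 2)) ?_
        intro t
        exact hptb _ _
      have hle2 : (∫ t : ℝ, γ / 2 * (x (t - τ) ^ 2 + x t ^ 2)) = γ * C := by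
        rw [integral_const_mul, integral_add (hx2τ τ) hx2, hshiftx2 τ, ← hCdef]
        ring
      have hnn : 0 ≤ ∫ t : ℝ, ‖F (τ, t)‖ :=
        integral_nonneg fun t => norm_nonneg _
      have hCnn : 0 ≤ C := by
        rw [hCdef]; exact integral_nonneg fun t => sq_nonneg _
      have hmain : |h τ| * (∫ t : ℝ, |x (t - τ) * φ (x t)|) ≤ |h τ| * (γ * C) := by
        refine mul_le_mul_of_nonneg_left ?_ (abs_nonneg _)
        rw [← hle2]; exact hle1
      rw [Real.norm_eq_abs, abs_of_nonneg hnn, hnorm_int, Real.norm_eq_abs, abs_mul,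
        Real.norm_eq_abs, abs_abs, abs_of_nonneg (mul_nonneg hγ.le hCnn)]
      nlinarith [hmain]
  -- Fubini
  have hswap : (∫ τ : ℝ, ∫ t : ℝ, F (τ, t)) = ∫ t : ℝ, ∫ τ : ℝ, F (τ, t) :=
    integral_integral_swap (f := fun τ t => F (τ, t)) hFint
  -- the convolution term
  have hconv_eq : ∀ t : ℝ, (∫ τ : ℝ, h τ * x (t - τ)) * φ (x t) =
      ∫ τ : ℝ, F (τ, t) := by
    intro t
    rw [← integral_mul_const]
    congr 1
    funext τ
    simp [hFdef, mul_assoc]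
  have hconv_int : Integrable (fun t => (∫ τ : ℝ, h τ * x (t - τ)) * φ (x t)) volume := by
    have := hFint.integral_prod_right
    refine this.congr ?_
    filter_upwards with t
    exact (hconv_eq t).symm
  -- bound the double integral
  have hJle : (∫ t : ℝ, (∫ τ : ℝ, h τ * x (t - τ)) * φ (x t)) ≤ (∫ τ : ℝ, h τ) * I := by
    have h1 : (∫ t : ℝ, (∫ τ : ℝ, h τ * x (t - τ)) * φ (x t)) =
        ∫ t : ℝ, ∫ τ : ℝ, F (τ, t) := by
      congr 1; funext t; exact hconv_eq t
    rw [h1, ← hswap]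
    have h2 : (∫ τ : ℝ, ∫ t : ℝ, F (τ, t)) ≤ ∫ τ : ℝ, h τ * I := by
      refine integral_mono hFint.integral_prod_left (hh_int.mul_const I) ?_
      intro τ
      have h3 : (∫ t : ℝ, F (τ, t)) = h τ * ∫ t : ℝ, x (t - τ) * φ (x t) := by
        simp_rw [hFdef]
        rw [integral_const_mul]
      show (∫ t : ℝ, F (τ, t)) ≤ h τ * I
      rw [h3]
      exact mul_le_mul_of_nonneg_left (hgle τ) (hh_pos τ)
    rw [integral_mul_const] at h2
    exact h2
  -- absolute value of h integral
  have habs : (∫ τ : ℝ, |h τ|) = ∫ τ : ℝ, h τ := by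
    congr 1; funext τ; exact abs_of_nonneg (hh_pos τ)
  -- final computation
  have hLHS : (∫ t : ℝ, (x t - ∫ τ : ℝ, h τ * x (t - τ)) * φ (x t)) =
      I - ∫ t : ℝ, (∫ τ : ℝ, h τ * x (t - τ)) * φ (x t) := by
    rw [hIdef, ← integral_sub hxφ hconv_int]
    congr 1; funext t; ring
  rw [hLHS, habs, ge_iff_le, sub_mul, one_mul]
  linarith [hJle]
end

section
/- Let φ : ℝ → ℝ be monotone non-decreasing and odd with φ(0) = 0 and |φ(σ)| ≤ γ|σ| for all σ ∈ ℝ, for some γ > 0. Let x : ℝ → ℝ be measurable and square-integrable over ℝ, and let h : ℝ → ℝ be integrable (not necessarily nonnegative). Then ∫_{−∞}^{∞} (x(t) − (h ⋆ x)(t)) φ(x(t)) dt ≥ (1 − ∫_{−∞}^{∞} |h(τ)| dτ) · ∫_{−∞}^{∞} x(t) φ(x(t)) dt, where (h ⋆ x)(t) = ∫_{−∞}^{∞} h(τ) x(t − τ) dτ denotes convolution. -/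
open MeasureTheory

theorem zames_falb_bound_odd (φ : ℝ → ℝ)
    (hmono : ∀ x y : ℝ, (φ x - φ y) * (x - y) ≥ 0)
    (hodd : ∀ x : ℝ, φ (-x) = -φ x)
    (hzero : φ 0 = 0)
    (γ : ℝ) (hγ : γ > 0)
    (hbound : ∀ σ : ℝ, |φ σ| ≤ γ * |σ|)
    (x : ℝ → ℝ) (hx_meas : Measurable x)
    (hx : MemLp x 2 (volume : Measure ℝ))
    (h : ℝ → ℝ) (hh_int : Integrable h (volume : Measure ℝ)) :
    (∫ t : ℝ, (x t - ∫ τ : ℝ, h τ * x (t - τ)) * φ (x t)) ≥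
      (1 - ∫ τ : ℝ, |h τ|) * ∫ t : ℝ, x t * φ (x t) := by
  -- φ is monotone
  have hφmono : Monotone φ := by
    intro a b hab
    rcases eq_or_lt_of_le hab with rfl | hlt
    · exact le_rfl
    · by_contra hc
      push_neg at hc
      nlinarith [hmono b a]
  have hφmeas : Measurable φ := hφmono.measurable
  have hφnn : ∀ u : ℝ, 0 ≤ u → 0 ≤ φ u := fun u hu => hzero ▸ hφmono hu
  -- the primitive Φ
  set Φ : ℝ → ℝ := fun u => ∫ s in (0:ℝ)..u, φ s with hΦdef
  have hii : ∀ a b : ℝ, IntervalIntegrable φ volume a b := fun a b =>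
    hφmono.intervalIntegrable
  have hΦcont : Continuous Φ := intervalIntegral.continuous_primitive hii 0
  have hΦ0 : Φ 0 = 0 := intervalIntegral.integral_same
  have hΦsub : ∀ a b : ℝ, Φ b - Φ a = ∫ s in a..b, φ s := fun a b =>
    intervalIntegral.integral_interval_sub_left (hii 0 b) (hii 0 a)
  have hΦkey : ∀ a b : ℝ, Φ b - Φ a ≤ φ b * (b - a) := by
    intro a b
    rw [hΦsub a b]
    rcases le_total a b with hab | hba
    · have hm : (∫ s in a..b, φ s) ≤ ∫ s in a..b, φ b :=
        intervalIntegral.integral_mono_on hab (hii a b) intervalIntegrable_const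
          (fun s hs => hφmono hs.2)
      rw [intervalIntegral.integral_const, smul_eq_mul] at hm
      nlinarith
    · rw [intervalIntegral.integral_symm]
      have hm : (∫ s in b..a, φ b) ≤ ∫ s in b..a, φ s :=
        intervalIntegral.integral_mono_on hba intervalIntegrable_const (hii b a)
          (fun s hs => hφmono hs.1)
      rw [intervalIntegral.integral_const, smul_eq_mul] at hm
      nlinarith
  have hΦeven : ∀ u : ℝ, Φ (-u) = Φ u := by
    intro u
    have h1 : (∫ s in (0:ℝ)..u, φ (-s)) = ∫ s in (-u)..(0:ℝ), φ s := by
      simpa using intervalIntegral.integral_comp_neg (a := 0) (b := u) (f := φ)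
    have h2 : (∫ s in (0:ℝ)..u, φ (-s)) = -Φ u := by
      simp only [hodd]
      rw [intervalIntegral.integral_neg]
    have h3 : Φ (-u) = -(∫ s in (-u)..(0:ℝ), φ s) := by
      rw [hΦdef]
      exact intervalIntegral.integral_symm (-u) 0
    rw [h3, ← h1, h2, neg_neg]
  have hΦnonneg0 : ∀ u : ℝ, 0 ≤ u → 0 ≤ Φ u := by
    intro u hu
    exact intervalIntegral.integral_nonneg hu (fun s hs => hφnn s hs.1)
  have hΦnonneg : ∀ u : ℝ, 0 ≤ Φ u := by
    intro u
    rcases le_total 0 u with hu | hu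
    · exact hΦnonneg0 u hu
    · rw [← hΦeven u]
      exact hΦnonneg0 (-u) (by linarith)
  have hΦle0 : ∀ u : ℝ, 0 ≤ u → Φ u ≤ γ / 2 * u ^ 2 := by
    intro u hu
    have hm : Φ u ≤ ∫ s in (0:ℝ)..u, γ * s := by
      refine intervalIntegral.integral_mono_on hu (hii 0 u)
        ((continuous_const.mul continuous_id).intervalIntegrable 0 u) ?_
      intro s hs
      have hb := hbound s
      rw [abs_of_nonneg hs.1] at hb
      exact (le_abs_self _).trans hb
    have he : (∫ s in (0:ℝ)..u, γ * s) = γ / 2 * u ^ 2 := by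
      rw [intervalIntegral.integral_const_mul, integral_id]
      ring
    linarith
  have hΦle : ∀ u : ℝ, Φ u ≤ γ / 2 * u ^ 2 := by
    intro u
    rcases le_total 0 u with hu | hu
    · exact hΦle0 u hu
    · have := hΦle0 (-u) (by linarith)
      rw [hΦeven u] at this
      simpa [neg_sq] using this
  -- key pointwise inequality
  have hkey : ∀ a b : ℝ, |a * φ b| ≤ (b * φ b - Φ b) + Φ a := by
    intro a b
    rw [abs_le]
    constructor
    · have hk := hΦkey (-a) b
      rw [hΦeven a] at hk
      nlinarith
    · have hk := hΦkey a b
      nlinarith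
  -- integrability on ℝ
  have hx2 : Integrable (fun t => x t ^ 2) volume := hx.integrable_sq
  have hφx_meas : Measurable fun t => φ (x t) := hφmeas.comp hx_meas
  have hxφ : Integrable (fun t => x t * φ (x t)) volume := by
    refine (hx2.const_mul γ).mono'
      ((hx_meas.mul hφx_meas).aestronglyMeasurable) ?_
    refine Filter.Eventually.of_forall fun t => ?_
    rw [Real.norm_eq_abs, abs_mul]
    calc |x t| * |φ (x t)| ≤ |x t| * (γ * |x t|) :=
          mul_le_mul_of_nonneg_left (hbound _) (abs_nonneg _)
      _ = γ * x t ^ 2 := by rw [← sq_abs]; ring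
  have hΦx : Integrable (fun t => Φ (x t)) volume := by
    refine ((hx2.const_mul (γ / 2))).mono'
      ((hΦcont.measurable.comp hx_meas).aestronglyMeasurable) ?_
    refine Filter.Eventually.of_forall fun t => ?_
    rw [Real.norm_eq_abs, abs_of_nonneg (hΦnonneg _)]
    exact hΦle _
  have hgx : Integrable (fun t => x t * φ (x t) - Φ (x t)) volume := hxφ.sub hΦx
  have habs : Integrable (fun τ => |h τ|) volume := hh_int.abs
  -- integrability of sheared products on the product space
  have hcomp : ∀ (f g : ℝ → ℝ), Integrable f volume → Integrable g volume →
      Integrable (fun p : ℝ × ℝ => f (p.1 - p.2) * g p.2)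
        ((volume : Measure ℝ).prod volume) := by
    intro f g hf hg
    have h1 : Integrable (fun q : ℝ × ℝ => f q.1 * g q.2)
        ((volume : Measure ℝ).prod volume) := hf.mul_prod hg
    have h2 := ((measurePreserving_sub_prod (volume : Measure ℝ) volume).integrable_comp
      h1.aestronglyMeasurable).mpr h1
    exact h2
  -- the product integrand
  have hF : Integrable (fun p : ℝ × ℝ => h p.2 * x (p.1 - p.2) * φ (x p.1))
      ((volume : Measure ℝ).prod volume) := by
    have hmaj : Integrable (fun p : ℝ × ℝ =>
        γ * (x (p.1 - p.2) ^ 2 * |h p.2|) + x p.1 ^ 2 * (γ * |h p.2|))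
        ((volume : Measure ℝ).prod volume) :=
      ((hcomp _ _ hx2 habs).const_mul γ).add (hx2.mul_prod (habs.const_mul γ))
    refine hmaj.mono' ?_ ?_
    · exact (hh_int.aestronglyMeasurable.comp_snd.mul
        (hx_meas.comp (measurable_fst.sub measurable_snd)).aestronglyMeasurable).mul
        ((hφx_meas.comp measurable_fst).aestronglyMeasurable)
    · refine Filter.Eventually.of_forall fun p => ?_
      have hAB : |x (p.1 - p.2)| * |x p.1| ≤ x (p.1 - p.2) ^ 2 + x p.1 ^ 2 := by
        nlinarith [sq_nonneg (|x (p.1 - p.2)| - |x p.1|), sq_abs (x (p.1 - p.2)),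
          sq_abs (x p.1), mul_nonneg (abs_nonneg (x (p.1 - p.2))) (abs_nonneg (x p.1))]
      calc ‖h p.2 * x (p.1 - p.2) * φ (x p.1)‖
          = |h p.2| * |x (p.1 - p.2)| * |φ (x p.1)| := by
            rw [Real.norm_eq_abs, abs_mul, abs_mul]
        _ ≤ |h p.2| * |x (p.1 - p.2)| * (γ * |x p.1|) :=
            mul_le_mul_of_nonneg_left (hbound _)
              (mul_nonneg (abs_nonneg _) (abs_nonneg _))
        _ = (γ * |h p.2|) * (|x (p.1 - p.2)| * |x p.1|) := by ring
        _ ≤ (γ * |h p.2|) * (x (p.1 - p.2) ^ 2 + x p.1 ^ 2) :=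
            mul_le_mul_of_nonneg_left hAB
              (mul_nonneg (le_of_lt hγ) (abs_nonneg _))
        _ = γ * (x (p.1 - p.2) ^ 2 * |h p.2|) + x p.1 ^ 2 * (γ * |h p.2|) := by ring
  -- the majorant on the product space
  have hM2 : Integrable (fun p : ℝ × ℝ =>
      |h p.2| * ((x p.1 * φ (x p.1) - Φ (x p.1)) + Φ (x (p.1 - p.2))))
      ((volume : Measure ℝ).prod volume) := by
    have t1 : Integrable (fun p : ℝ × ℝ =>
        (x p.1 * φ (x p.1) - Φ (x p.1)) * |h p.2|)
        ((volume : Measure ℝ).prod volume) := hgx.mul_prod habs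
    have t2 : Integrable (fun p : ℝ × ℝ => Φ (x (p.1 - p.2)) * |h p.2|)
        ((volume : Measure ℝ).prod volume) := hcomp _ _ hΦx habs
    exact (t1.add t2).congr (Filter.Eventually.of_forall fun p => by simp only [Pi.add_apply]; ring)
  -- the convolution term written as an iterated integral
  have hconvmul : ∀ t : ℝ, (∫ τ : ℝ, h τ * x (t - τ)) * φ (x t)
      = ∫ τ : ℝ, h τ * x (t - τ) * φ (x t) := fun t =>
    (integral_mul_const (φ (x t)) (fun τ => h τ * x (t - τ))).symm
  have hconvφ_int : Integrable (fun t => (∫ τ : ℝ, h τ * x (t - τ)) * φ (x t)) volume := by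
    have := hF.integral_prod_left
    exact this.congr (Filter.Eventually.of_forall fun t => (hconvmul t).symm)
  -- Fubini
  have step1 : (∫ t : ℝ, (∫ τ : ℝ, h τ * x (t - τ)) * φ (x t))
      = ∫ p : ℝ × ℝ, h p.2 * x (p.1 - p.2) * φ (x p.1)
          ∂((volume : Measure ℝ).prod volume) := by
    rw [show (fun t : ℝ => (∫ τ : ℝ, h τ * x (t - τ)) * φ (x t))
        = fun t : ℝ => ∫ τ : ℝ, h τ * x (t - τ) * φ (x t) from funext hconvmul]
    exact MeasureTheory.integral_integral
      (f := fun t τ : ℝ => h τ * x (t - τ) * φ (x t)) hF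
  -- pointwise domination on the product
  have step2 : (∫ p : ℝ × ℝ, h p.2 * x (p.1 - p.2) * φ (x p.1)
        ∂((volume : Measure ℝ).prod volume))
      ≤ ∫ p : ℝ × ℝ, |h p.2| * ((x p.1 * φ (x p.1) - Φ (x p.1)) + Φ (x (p.1 - p.2)))
        ∂((volume : Measure ℝ).prod volume) := by
    refine integral_mono hF hM2 fun p => ?_
    have hk := hkey (x (p.1 - p.2)) (x p.1)
    calc h p.2 * x (p.1 - p.2) * φ (x p.1)
        ≤ |h p.2 * x (p.1 - p.2) * φ (x p.1)| := le_abs_self _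
      _ = |h p.2| * |x (p.1 - p.2) * φ (x p.1)| := by rw [mul_assoc, abs_mul]
      _ ≤ |h p.2| * ((x p.1 * φ (x p.1) - Φ (x p.1)) + Φ (x (p.1 - p.2))) :=
          mul_le_mul_of_nonneg_left hk (abs_nonneg _)
  -- computing the majorant integral
  have step3 : (∫ p : ℝ × ℝ, |h p.2| * ((x p.1 * φ (x p.1) - Φ (x p.1)) + Φ (x (p.1 - p.2)))
        ∂((volume : Measure ℝ).prod volume))
      = (∫ τ : ℝ, |h τ|) * ∫ t : ℝ, x t * φ (x t) := by
    rw [MeasureTheory.integral_prod_symm _ hM2]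
    have inner : ∀ τ : ℝ,
        (∫ t : ℝ, |h τ| * ((x t * φ (x t) - Φ (x t)) + Φ (x (t - τ))))
          = |h τ| * ∫ t : ℝ, x t * φ (x t) := by
      intro τ
      have hΦshift : Integrable (fun t => Φ (x (t - τ))) volume :=
        ((measurePreserving_sub_right (volume : Measure ℝ) τ).integrable_comp
          hΦx.aestronglyMeasurable).mpr hΦx
      rw [integral_const_mul]
      congr 1
      rw [integral_add hgx hΦshift,
        integral_sub_right_eq_self (fun t => Φ (x t)) τ,
        integral_sub hxφ hΦx]
      ring
    calc (∫ τ : ℝ, ∫ t : ℝ, |h τ| * ((x t * φ (x t) - Φ (x t)) + Φ (x (t - τ))))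
        = ∫ τ : ℝ, |h τ| * ∫ t : ℝ, x t * φ (x t) := by
          exact integral_congr_ae (Filter.Eventually.of_forall inner)
      _ = (∫ τ : ℝ, |h τ|) * ∫ t : ℝ, x t * φ (x t) :=
          integral_mul_const _ _
  -- splitting the left-hand side
  have e1 : (∫ t : ℝ, (x t - ∫ τ : ℝ, h τ * x (t - τ)) * φ (x t))
      = (∫ t : ℝ, x t * φ (x t)) - ∫ t : ℝ, (∫ τ : ℝ, h τ * x (t - τ)) * φ (x t) := by
    rw [← integral_sub hxφ hconvφ_int]
    exact integral_congr_ae (Filter.Eventually.of_forall fun t => by ring)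
  have hstep : (∫ t : ℝ, (∫ τ : ℝ, h τ * x (t - τ)) * φ (x t))
      ≤ (∫ τ : ℝ, |h τ|) * ∫ t : ℝ, x t * φ (x t) := by
    rw [step1]
    exact step2.trans (le_of_eq step3)
  rw [ge_iff_le, e1]
  nlinarith [hstep]
end

section
/- (Zames–Falb time-domain IQC for monotone nonlinearities.) Let φ : ℝ → ℝ be monotone non-decreasing with φ(0) = 0 and |φ(σ)| ≤ γ|σ| for all σ ∈ ℝ, for some γ > 0. Let x : ℝ → ℝ be measurable and square-integrable over ℝ, and let h : ℝ → ℝ be integrable with h(t) ≥ 0 for all t and ∫_{−∞}^{∞} |h(τ)| dτ ≤ 1. Then ∫_{−∞}^{∞} (x(t) − (h ⋆ x)(t)) φ(x(t)) dt ≥ 0, where (h ⋆ x)(t) = ∫_{−∞}^{∞} h(τ) x(t − τ) dτ denotes convolution. -/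
open MeasureTheory

theorem zames_falb_iqc_monotone (φ : ℝ → ℝ)
    (hmono : ∀ x y : ℝ, (φ x - φ y) * (x - y) ≥ 0)
    (hzero : φ 0 = 0)
    (γ : ℝ) (hγ : γ > 0)
    (hbound : ∀ σ : ℝ, |φ σ| ≤ γ * |σ|)
    (x : ℝ → ℝ) (hx_meas : Measurable x)
    (hx : MemLp x 2 (volume : Measure ℝ))
    (h : ℝ → ℝ) (hh_int : Integrable h (volume : Measure ℝ))
    (hh_pos : ∀ t : ℝ, h t ≥ 0)
    (hh_norm : (∫ τ : ℝ, |h τ|) ≤ 1) :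
    (∫ t : ℝ, (x t - ∫ τ : ℝ, h τ * x (t - τ)) * φ (x t)) ≥ 0 := by
  -- φ is monotone
  have hφmono : Monotone φ := by
    intro a b hab
    rcases eq_or_lt_of_le hab with rfl | hlt
    · exact le_refl _
    · have := hmono b a
      nlinarith
  have hφmeas : Measurable φ := hφmono.measurable
  -- The primitive Φ of φ
  set Φ : ℝ → ℝ := fun u => ∫ s in (0:ℝ)..u, φ s with hΦdef
  have hΦii : ∀ a b : ℝ, IntervalIntegrable φ volume a b := fun a b =>
    hφmono.intervalIntegrable
  have hΦcont : Continuous Φ := intervalIntegral.continuous_primitive hΦii 0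
  have hφnonneg : ∀ s : ℝ, 0 ≤ s → 0 ≤ φ s := fun s hs => by
    simpa [hzero] using hφmono hs
  have hφnonpos : ∀ s : ℝ, s ≤ 0 → φ s ≤ 0 := fun s hs => by
    simpa [hzero] using hφmono hs
  have hΦnonneg : ∀ u : ℝ, 0 ≤ Φ u := by
    intro u
    rcases le_total 0 u with hu | hu
    · exact intervalIntegral.integral_nonneg hu (fun s hs => hφnonneg s hs.1)
    · have h1 : ∫ s in u..0, φ s ≤ ∫ s in u..0, (0:ℝ) :=
        intervalIntegral.integral_mono_on hu (hΦii u 0) intervalIntegrable_const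
          (fun s hs => hφnonpos s hs.2)
      have h0 : Φ u = -∫ s in u..0, φ s := by
        rw [hΦdef]
        exact intervalIntegral.integral_symm u 0
      simp only [intervalIntegral.integral_zero] at h1
      linarith
  have hγid : ∀ a b : ℝ, IntervalIntegrable (fun s => γ * s) volume a b :=
    fun a b => (continuous_const.mul continuous_id).intervalIntegrable a b
  have hΦle : ∀ u : ℝ, Φ u ≤ γ / 2 * u ^ 2 := by
    intro u
    rcases le_total 0 u with hu | hu
    · have h1 : Φ u ≤ ∫ s in (0:ℝ)..u, γ * s := by
        apply intervalIntegral.integral_mono_on hu (hΦii 0 u) (hγid 0 u)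
        intro s hs
        have hb := hbound s
        rw [abs_of_nonneg hs.1] at hb
        calc φ s ≤ |φ s| := le_abs_self _
          _ ≤ γ * s := hb
      have h2 : ∫ s in (0:ℝ)..u, γ * s = γ * ((u ^ 2 - 0 ^ 2) / 2) := by
        rw [intervalIntegral.integral_const_mul, integral_id]
      nlinarith
    · have h1 : ∫ s in u..(0:ℝ), γ * s ≤ ∫ s in u..(0:ℝ), φ s := by
        apply intervalIntegral.integral_mono_on hu (hγid u 0) (hΦii u 0)
        intro s hs
        have hb := hbound s
        rw [abs_of_nonpos hs.2] at hb
        have hn : -|φ s| ≤ φ s := neg_abs_le _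
        have : -(γ * -s) ≤ φ s := by
          calc -(γ * -s) ≤ -|φ s| := by linarith
            _ ≤ φ s := hn
        linarith
      have h0 : Φ u = -∫ s in u..0, φ s := by
        rw [hΦdef]
        exact intervalIntegral.integral_symm u 0
      have h2 : ∫ s in u..(0:ℝ), γ * s = γ * ((0 ^ 2 - u ^ 2) / 2) := by
        rw [intervalIntegral.integral_const_mul, integral_id]
      nlinarith
  -- subgradient inequality : b * φ a ≤ Φ b - Φ a + a * φ a
  have hsub : ∀ a b : ℝ, b * φ a ≤ Φ b - Φ a + a * φ a := by
    intro a b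
    rcases le_total a b with hab | hab
    · have h1 : Φ b - Φ a = ∫ s in a..b, φ s :=
        intervalIntegral.integral_interval_sub_left (hΦii 0 b) (hΦii 0 a)
      have h2 : ∫ s in a..b, (φ a) ≤ ∫ s in a..b, φ s :=
        intervalIntegral.integral_mono_on hab intervalIntegrable_const (hΦii a b)
          (fun s hs => hφmono hs.1)
      rw [intervalIntegral.integral_const, smul_eq_mul] at h2
      nlinarith
    · have h1 : Φ a - Φ b = ∫ s in b..a, φ s :=
        intervalIntegral.integral_interval_sub_left (hΦii 0 a) (hΦii 0 b)
      have h2 : ∫ s in b..a, φ s ≤ ∫ s in b..a, (φ a) :=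
        intervalIntegral.integral_mono_on hab (hΦii b a) intervalIntegrable_const
          (fun s hs => hφmono hs.2)
      rw [intervalIntegral.integral_const, smul_eq_mul] at h2
      nlinarith
  -- integrabilities
  have hxsq : Integrable (fun t => x t ^ 2) := hx.integrable_sq
  have hg_int : Integrable (fun t => x t * φ (x t)) := by
    apply Integrable.mono' (hxsq.const_mul γ)
    · exact (hx_meas.mul (hφmeas.comp hx_meas)).aestronglyMeasurable
    · filter_upwards with t
      have hb := hbound (x t)
      have habs : ‖x t * φ (x t)‖ = |x t| * |φ (x t)| := by
        rw [Real.norm_eq_abs, abs_mul]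
      rw [habs]
      nlinarith [abs_nonneg (x t), sq_abs (x t), abs_nonneg (φ (x t))]
  have hΦx_int : Integrable (fun t => Φ (x t)) := by
    apply Integrable.mono' (hxsq.const_mul (γ / 2))
    · exact (hΦcont.measurable.comp hx_meas).aestronglyMeasurable
    · filter_upwards with t
      rw [Real.norm_eq_abs, abs_of_nonneg (hΦnonneg _)]
      exact hΦle (x t)
  have hk_meas : ∀ τ : ℝ, Measurable (fun t => x (t - τ) * φ (x t)) := fun τ =>
    (hx_meas.comp (measurable_id.sub measurable_const)).mul (hφmeas.comp hx_meas)
  have hk_bound : ∀ τ t : ℝ, ‖x (t - τ) * φ (x t)‖ ≤ γ / 2 * (x (t - τ) ^ 2 + x t ^ 2) := by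
    intro τ t
    have hb := hbound (x t)
    rw [Real.norm_eq_abs, abs_mul]
    nlinarith [abs_nonneg (x (t - τ)), abs_nonneg (x t), sq_abs (x (t - τ)), sq_abs (x t),
      sq_nonneg (|x (t - τ)| - |x t|), abs_nonneg (φ (x t))]
  have hdom_int : ∀ τ : ℝ, Integrable (fun t => γ / 2 * (x (t - τ) ^ 2 + x t ^ 2)) := fun τ =>
    ((hxsq.comp_sub_right τ).add hxsq).const_mul (γ / 2)
  have hk_int : ∀ τ : ℝ, Integrable (fun t => x (t - τ) * φ (x t)) := by
    intro τ
    apply Integrable.mono' (hdom_int τ) (hk_meas τ).aestronglyMeasurable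
    filter_upwards with t
    exact hk_bound τ t
  -- key per-τ inequality
  have hkey : ∀ τ : ℝ, ∫ t, x (t - τ) * φ (x t) ≤ ∫ t, x t * φ (x t) := by
    intro τ
    have hsub_int : Integrable (fun t => x t * φ (x t) - Φ (x t)) := hg_int.sub hΦx_int
    have hint2 : Integrable (fun t => Φ (x (t - τ)) + (x t * φ (x t) - Φ (x t))) :=
      (hΦx_int.comp_sub_right τ).add hsub_int
    have h1 : ∫ t, x (t - τ) * φ (x t)
        ≤ ∫ t, (Φ (x (t - τ)) + (x t * φ (x t) - Φ (x t))) := by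
      apply integral_mono (hk_int τ) hint2
      intro t
      have := hsub (x t) (x (t - τ))
      simp only
      linarith
    have h2 : ∫ t, (Φ (x (t - τ)) + (x t * φ (x t) - Φ (x t)))
        = (∫ t, Φ (x (t - τ))) + ((∫ t, x t * φ (x t)) - ∫ t, Φ (x t)) := by
      rw [integral_add (hΦx_int.comp_sub_right τ) hsub_int,
        integral_sub hg_int hΦx_int]
    have h3 : (∫ t, Φ (x (t - τ))) = ∫ t, Φ (x t) :=
      integral_sub_right_eq_self (fun t => Φ (x t)) τ
    linarith
  -- product integrability
  set F : ℝ × ℝ → ℝ := fun p => h p.1 * (x (p.2 - p.1) * φ (x p.2)) with hFdef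
  have hF_meas : AEStronglyMeasurable F ((volume : Measure ℝ).prod volume) := by
    apply AEStronglyMeasurable.mul
    · exact hh_int.aestronglyMeasurable.comp_fst
    · exact ((hx_meas.comp (measurable_snd.sub measurable_fst)).mul
        ((hφmeas.comp hx_meas).comp measurable_snd)).aestronglyMeasurable
  have hxsq_int : (0:ℝ) ≤ ∫ t, x t ^ 2 := integral_nonneg (fun t => sq_nonneg _)
  set C : ℝ := γ * ∫ t, x t ^ 2 with hC
  have hknorm : ∀ τ : ℝ, ∫ t, ‖x (t - τ) * φ (x t)‖ ≤ C := by
    intro τ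
    have h1 : ∫ t, ‖x (t - τ) * φ (x t)‖ ≤ ∫ t, γ / 2 * (x (t - τ) ^ 2 + x t ^ 2) := by
      apply integral_mono (hk_int τ).norm (hdom_int τ)
      intro t
      exact hk_bound τ t
    have h2 : ∫ t, γ / 2 * (x (t - τ) ^ 2 + x t ^ 2)
        = γ / 2 * ((∫ t, x (t - τ) ^ 2) + ∫ t, x t ^ 2) := by
      rw [integral_const_mul, integral_add (hxsq.comp_sub_right τ) hxsq]
    have h3 : (∫ t, x (t - τ) ^ 2) = ∫ t, x t ^ 2 :=
      integral_sub_right_eq_self (fun t => x t ^ 2) τ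
    rw [h2, h3] at h1
    rw [hC]
    linarith
  have hF_int : Integrable F ((volume : Measure ℝ).prod volume) := by
    rw [integrable_prod_iff hF_meas]
    constructor
    · filter_upwards with τ
      exact (hk_int τ).const_mul (h τ)
    · apply Integrable.mono' (hh_int.abs.mul_const C)
      · exact hF_meas.norm.integral_prod_right'
      · filter_upwards with τ
        have h1 : ∀ t : ℝ, ‖F (τ, t)‖ = |h τ| * ‖x (t - τ) * φ (x t)‖ := by
          intro t
          simp only [hFdef, Real.norm_eq_abs, abs_mul]
        have h2 : ∫ t, ‖F (τ, t)‖ = |h τ| * ∫ t, ‖x (t - τ) * φ (x t)‖ := by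
          simp_rw [h1]
          rw [integral_const_mul]
        have hnn : 0 ≤ ∫ t, ‖F (τ, t)‖ := integral_nonneg (fun t => norm_nonneg _)
        rw [Real.norm_eq_abs, abs_of_nonneg hnn, h2]
        exact mul_le_mul_of_nonneg_left (hknorm τ) (abs_nonneg _)
  -- representation of convolution term
  have hrepr : ∀ t : ℝ, (∫ τ, h τ * x (t - τ)) * φ (x t) = ∫ τ, F (τ, t) := by
    intro t
    rw [← integral_mul_const]
    congr 1
    ext τ
    simp only [hFdef]
    ring
  have hconv_int : Integrable (fun t => (∫ τ, h τ * x (t - τ)) * φ (x t)) := by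
    have := hF_int.integral_prod_right
    apply this.congr
    filter_upwards with t
    exact (hrepr t).symm
  -- nonnegativity of ∫ x φ(x)
  have hIg : (0:ℝ) ≤ ∫ t, x t * φ (x t) := by
    apply integral_nonneg
    intro t
    simp only [Pi.zero_apply]
    have := hmono (x t) 0
    rw [hzero] at this
    nlinarith
  -- the convolution integral bound
  have hmain : ∫ t, (∫ τ, h τ * x (t - τ)) * φ (x t) ≤ ∫ t, x t * φ (x t) := by
    have hs1 : ∫ t, (∫ τ, h τ * x (t - τ)) * φ (x t) = ∫ t, ∫ τ, F (τ, t) := by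
      congr 1
      ext t
      exact hrepr t
    have hswap : ∫ τ, ∫ t, F (τ, t) = ∫ t, ∫ τ, F (τ, t) :=
      integral_integral_swap hF_int
    have hs2 : ∫ τ, ∫ t, F (τ, t) ≤ ∫ τ, h τ * ∫ t, x t * φ (x t) := by
      apply integral_mono hF_int.integral_prod_left (hh_int.mul_const _)
      intro τ
      have : ∫ t, F (τ, t) = h τ * ∫ t, x (t - τ) * φ (x t) := by
        simp only [hFdef]
        exact integral_const_mul _ _
      simp only
      rw [this]
      exact mul_le_mul_of_nonneg_left (hkey τ) (hh_pos τ)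
    have hs3 : ∫ τ, h τ * ∫ t, x t * φ (x t) = (∫ τ, h τ) * ∫ t, x t * φ (x t) :=
      integral_mul_const _ _
    have hh1 : (∫ τ, h τ) ≤ 1 := by
      have : (∫ τ, h τ) = ∫ τ, |h τ| := by
        congr 1
        ext τ
        exact (abs_of_nonneg (hh_pos τ)).symm
      linarith [hh_norm, this ▸ le_refl (∫ τ, h τ)]
    have hh0 : (∫ τ, h τ) * (∫ t, x t * φ (x t)) ≤ ∫ t, x t * φ (x t) := by
      nlinarith
    linarith [hs1, hswap, hs2, hs3]
  -- final assembly
  have hsplit : (∫ t, (x t - ∫ τ, h τ * x (t - τ)) * φ (x t))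
      = (∫ t, x t * φ (x t)) - ∫ t, (∫ τ, h τ * x (t - τ)) * φ (x t) := by
    rw [← integral_sub hg_int hconv_int]
    congr 1
    ext t
    ring
  rw [hsplit]
  linarith
end

section
/- (Zames–Falb time-domain IQC for odd monotone nonlinearities.) Let φ : ℝ → ℝ be monotone non-decreasing and odd with φ(0) = 0 and |φ(σ)| ≤ γ|σ| for all σ ∈ ℝ, for some γ > 0. Let x : ℝ → ℝ be measurable and square-integrable over ℝ, and let h : ℝ → ℝ be integrable (not necessarily nonnegative) with ∫_{−∞}^{∞} |h(τ)| dτ ≤ 1. Then ∫_{−∞}^{∞} (x(t) − (h ⋆ x)(t)) φ(x(t)) dt ≥ 0, where (h ⋆ x)(t) = ∫_{−∞}^{∞} h(τ) x(t − τ) dτ denotes convolution. -/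
open MeasureTheory

section ZFAux

variable {φ : ℝ → ℝ}

private lemma zf_mono (hmono : ∀ x y : ℝ, (φ x - φ y) * (x - y) ≥ 0) : Monotone φ := by
  intro a b hab
  rcases eq_or_lt_of_le hab with rfl | hlt
  · exact le_rfl
  · have := hmono b a
    nlinarith

/-- The primitive of φ. -/
noncomputable def zfPhi (φ : ℝ → ℝ) (a : ℝ) : ℝ := ∫ s in (0:ℝ)..a, φ s

private lemma zf_ii (hm : Monotone φ) (a b : ℝ) :
    IntervalIntegrable φ volume a b := hm.intervalIntegrable

private lemma zf_key (hm : Monotone φ) (a b : ℝ) :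
    (b - a) * φ a ≤ zfPhi φ b - zfPhi φ a := by
  have hsub : zfPhi φ b - zfPhi φ a = ∫ s in a..b, φ s :=
    intervalIntegral.integral_interval_sub_left (zf_ii hm 0 b) (zf_ii hm 0 a)
  rw [hsub]
  rcases le_total a b with hab | hba
  · have hc : (∫ s in a..b, φ a) ≤ ∫ s in a..b, φ s :=
      intervalIntegral.integral_mono_on hab intervalIntegrable_const (zf_ii hm a b)
        (fun s hs => hm hs.1)
    simpa [intervalIntegral.integral_const, smul_eq_mul] using hc
  · have hc : (∫ s in b..a, φ s) ≤ ∫ s in b..a, φ a :=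
      intervalIntegral.integral_mono_on hba (zf_ii hm b a) intervalIntegrable_const
        (fun s hs => hm hs.2)
    rw [intervalIntegral.integral_symm b a]
    simp only [intervalIntegral.integral_const, smul_eq_mul] at hc ⊢
    nlinarith

private lemma zf_young (hm : Monotone φ) (a b : ℝ) :
    b * φ a ≤ zfPhi φ b + (a * φ a - zfPhi φ a) := by
  have := zf_key hm a b
  nlinarith

private lemma zf_even (hodd : ∀ x : ℝ, φ (-x) = -φ x) (a : ℝ) :
    zfPhi φ (-a) = zfPhi φ a := by
  have h1 : (∫ s in (0:ℝ)..a, φ (-s)) = ∫ s in (-a)..(0:ℝ), φ s := by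
    simpa using intervalIntegral.integral_comp_neg (a := (0:ℝ)) (b := a) (f := φ)
  have h2 : (∫ s in (0:ℝ)..a, φ (-s)) = -∫ s in (0:ℝ)..a, φ s := by
    simp [hodd, intervalIntegral.integral_neg]
  have h3 : zfPhi φ (-a) = -∫ s in (-a)..(0:ℝ), φ s := by
    rw [zfPhi, intervalIntegral.integral_symm]
  rw [h3, ← h1, h2, neg_neg]
  rfl

private lemma zf_phi_nonneg (hm : Monotone φ) (hzero : φ 0 = 0) {a : ℝ} (ha : 0 ≤ a) :
    0 ≤ zfPhi φ a := by
  have hc : (∫ s in (0:ℝ)..a, (0:ℝ)) ≤ ∫ s in (0:ℝ)..a, φ s :=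
    intervalIntegral.integral_mono_on ha intervalIntegrable_const (zf_ii hm 0 a)
      (fun s hs => hzero ▸ hm hs.1)
  simpa [zfPhi] using hc

private lemma zf_Phi_nonneg (hm : Monotone φ) (hodd : ∀ x : ℝ, φ (-x) = -φ x)
    (hzero : φ 0 = 0) (a : ℝ) : 0 ≤ zfPhi φ a := by
  rcases le_total 0 a with ha | ha
  · exact zf_phi_nonneg hm hzero ha
  · rw [← zf_even hodd]
    exact zf_phi_nonneg hm hzero (by linarith)

private lemma zf_phi_le (hm : Monotone φ) {a : ℝ} (ha : 0 ≤ a) :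
    zfPhi φ a ≤ a * φ a := by
  have hc : (∫ s in (0:ℝ)..a, φ s) ≤ ∫ s in (0:ℝ)..a, φ a :=
    intervalIntegral.integral_mono_on ha (zf_ii hm 0 a) intervalIntegrable_const
      (fun s hs => hm hs.2)
  simpa [zfPhi, intervalIntegral.integral_const, smul_eq_mul] using hc

private lemma zf_Phi_le (hm : Monotone φ) (hodd : ∀ x : ℝ, φ (-x) = -φ x) (a : ℝ) :
    zfPhi φ a ≤ a * φ a := by
  rcases le_total 0 a with ha | ha
  · exact zf_phi_le hm ha
  · have := zf_phi_le hm (a := -a) (by linarith)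
    rw [zf_even hodd, hodd] at this
    nlinarith

end ZFAux

theorem zames_falb_iqc_odd (φ : ℝ → ℝ)
    (hmono : ∀ x y : ℝ, (φ x - φ y) * (x - y) ≥ 0)
    (hodd : ∀ x : ℝ, φ (-x) = -φ x)
    (hzero : φ 0 = 0)
    (γ : ℝ) (hγ : γ > 0)
    (hbound : ∀ σ : ℝ, |φ σ| ≤ γ * |σ|)
    (x : ℝ → ℝ) (hx_meas : Measurable x)
    (hx : MemLp x 2 (volume : Measure ℝ))
    (h : ℝ → ℝ) (hh_int : Integrable h (volume : Measure ℝ))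
    (hh_norm : (∫ τ : ℝ, |h τ|) ≤ 1) :
    (∫ t : ℝ, (x t - ∫ τ : ℝ, h τ * x (t - τ)) * φ (x t)) ≥ 0 := by
  have hm : Monotone φ := zf_mono hmono
  have hφmeas : Measurable φ := hm.measurable
  set Φ : ℝ → ℝ := zfPhi φ with hΦdef
  have hΦcont : Continuous Φ := intervalIntegral.continuous_primitive (zf_ii hm) 0
  -- basic pointwise bounds
  have habs : ∀ a b : ℝ, |a * φ b| ≤ γ / 2 * (a ^ 2 + b ^ 2) := by
    intro a b
    have h1 : |a * φ b| = |a| * |φ b| := abs_mul _ _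
    have h2 : |φ b| ≤ γ * |b| := hbound b
    have h3 : |a| * |b| ≤ (a ^ 2 + b ^ 2) / 2 := by nlinarith [sq_nonneg (|a| - |b|), sq_abs a, sq_abs b]
    nlinarith [abs_nonneg a, abs_nonneg (φ b), mul_le_mul_of_nonneg_left h2 (abs_nonneg a)]
  have haphia_nonneg : ∀ a : ℝ, 0 ≤ a * φ a := by
    intro a
    have := hmono a 0
    simp only [hzero, sub_zero] at this
    nlinarith
  have haphia_le : ∀ a : ℝ, a * φ a ≤ γ * a ^ 2 := by
    intro a
    have h1 : a * φ a ≤ |a * φ a| := le_abs_self _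
    have := habs a a
    nlinarith
  -- integrability basics
  have hx2 : Integrable (fun t => x t ^ 2) := hx.integrable_sq
  have hxφ : Integrable (fun t => x t * φ (x t)) := by
    refine (hx2.const_mul γ).mono' ((hx_meas.mul (hφmeas.comp hx_meas)).aestronglyMeasurable) ?_
    filter_upwards with t
    rw [Real.norm_eq_abs, abs_of_nonneg (haphia_nonneg _)]
    exact haphia_le _
  have hΦx : Integrable (fun t => Φ (x t)) := by
    refine (hx2.const_mul γ).mono' ((hΦcont.measurable.comp hx_meas).aestronglyMeasurable) ?_
    filter_upwards with t
    rw [Real.norm_eq_abs, abs_of_nonneg (zf_Phi_nonneg hm hodd hzero _)]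
    exact le_trans (zf_Phi_le hm hodd _) (haphia_le _)
  set K : ℝ := ∫ t : ℝ, x t * φ (x t) with hKdef
  have hK_nonneg : 0 ≤ K := integral_nonneg fun t => haphia_nonneg _
  -- shifted integrability
  have hxs2 : ∀ τ : ℝ, Integrable (fun t => x (t - τ) ^ 2) := fun τ => hx2.comp_sub_right τ
  have hprod : ∀ τ : ℝ, Integrable (fun t => x (t - τ) * φ (x t)) := by
    intro τ
    refine (((hxs2 τ).add hx2).const_mul (γ / 2)).mono'
      (((hx_meas.comp (measurable_id.sub measurable_const)).mul
        (hφmeas.comp hx_meas)).aestronglyMeasurable) ?_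
    filter_upwards with t
    rw [Real.norm_eq_abs]
    exact habs _ _
  have hΦxs : ∀ τ : ℝ, Integrable (fun t => Φ (x (t - τ))) := fun τ => hΦx.comp_sub_right τ
  have hΦshift_eq : ∀ τ : ℝ, (∫ t : ℝ, Φ (x (t - τ))) = ∫ t : ℝ, Φ (x t) := fun τ =>
    integral_sub_right_eq_self (fun t => Φ (x t)) τ
  -- the key correlation bound
  set I : ℝ → ℝ := fun τ => ∫ t : ℝ, x (t - τ) * φ (x t) with hIdef
  have hI_bound : ∀ τ : ℝ, |I τ| ≤ K := by
    intro τ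
    have hrhs_int : Integrable (fun t => Φ (x (t - τ)) + (x t * φ (x t) - Φ (x t))) :=
      (hΦxs τ).add (hxφ.sub hΦx)
    have hrhs_val : (∫ t : ℝ, (Φ (x (t - τ)) + (x t * φ (x t) - Φ (x t)))) = K := by
      have e1 : (∫ t : ℝ, (Φ (x (t - τ)) + (x t * φ (x t) - Φ (x t))))
          = (∫ t : ℝ, Φ (x (t - τ))) + ∫ t : ℝ, (x t * φ (x t) - Φ (x t)) :=
        integral_add (hΦxs τ) (hxφ.sub hΦx)
      have e2 : (∫ t : ℝ, (x t * φ (x t) - Φ (x t)))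
          = (∫ t : ℝ, x t * φ (x t)) - ∫ t : ℝ, Φ (x t) := integral_sub hxφ hΦx
      rw [e1, e2, hΦshift_eq τ]
      ring
    rw [abs_le]
    constructor
    · have hpt : ∀ t : ℝ, -(x (t - τ) * φ (x t)) ≤ Φ (x (t - τ)) + (x t * φ (x t) - Φ (x t)) := by
        intro t
        have := zf_young hm (x t) (-(x (t - τ)))
        rw [zf_even hodd] at this
        nlinarith
      have hle : (∫ t : ℝ, -(x (t - τ) * φ (x t)))
          ≤ ∫ t : ℝ, (Φ (x (t - τ)) + (x t * φ (x t) - Φ (x t))) :=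
        integral_mono (hprod τ).neg hrhs_int (fun t => hpt t)
      rw [integral_neg, hrhs_val] at hle
      linarith
    · have hpt : ∀ t : ℝ, x (t - τ) * φ (x t) ≤ Φ (x (t - τ)) + (x t * φ (x t) - Φ (x t)) :=
        fun t => zf_young hm (x t) (x (t - τ))
      have hle : (∫ t : ℝ, x (t - τ) * φ (x t))
          ≤ ∫ t : ℝ, (Φ (x (t - τ)) + (x t * φ (x t) - Φ (x t))) :=
        integral_mono (hprod τ) hrhs_int (fun t => hpt t)
      rw [hrhs_val] at hle
      exact hle
  -- Fubini setup
  set F : ℝ × ℝ → ℝ := fun p => h p.1 * (x (p.2 - p.1) * φ (x p.2)) with hFdef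
  have hF_meas : AEStronglyMeasurable F ((volume : Measure ℝ).prod volume) := by
    have h1 : AEStronglyMeasurable (fun p : ℝ × ℝ => h p.1) ((volume : Measure ℝ).prod volume) :=
      hh_int.aestronglyMeasurable.comp_quasiMeasurePreserving
        MeasureTheory.Measure.quasiMeasurePreserving_fst
    have h2 : Measurable (fun p : ℝ × ℝ => x (p.2 - p.1) * φ (x p.2)) :=
      (hx_meas.comp (measurable_snd.sub measurable_fst)).mul
        ((hφmeas.comp hx_meas).comp measurable_snd)
    exact h1.mul h2.aestronglyMeasurable
  have hnorm_bd : ∀ τ : ℝ, (∫ t : ℝ, ‖F (τ, t)‖) ≤ |h τ| * (γ * ∫ t : ℝ, x t ^ 2) := by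
    intro τ
    have hb : ∀ t : ℝ, ‖F (τ, t)‖ ≤ |h τ| * (γ / 2 * (x (t - τ) ^ 2 + x t ^ 2)) := by
      intro t
      simp only [hFdef]
      rw [Real.norm_eq_abs, abs_mul]
      exact mul_le_mul_of_nonneg_left (habs _ _) (abs_nonneg _)
    have hint : Integrable (fun t => |h τ| * (γ / 2 * (x (t - τ) ^ 2 + x t ^ 2))) :=
      (((hxs2 τ).add hx2).const_mul (γ / 2)).const_mul _
    calc (∫ t : ℝ, ‖F (τ, t)‖)
        ≤ ∫ t : ℝ, |h τ| * (γ / 2 * (x (t - τ) ^ 2 + x t ^ 2)) := by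
          refine integral_mono ((hprod τ).const_mul (h τ)).norm hint hb
      _ = |h τ| * (γ / 2 * ((∫ t : ℝ, x (t - τ) ^ 2) + ∫ t : ℝ, x t ^ 2)) := by
          rw [integral_const_mul, integral_const_mul, integral_add (hxs2 τ) hx2]
      _ = |h τ| * (γ * ∫ t : ℝ, x t ^ 2) := by
          rw [integral_sub_right_eq_self (fun t => x t ^ 2) τ]
          ring
  have hF_int : Integrable F ((volume : Measure ℝ).prod volume) := by
    rw [integrable_prod_iff hF_meas]
    constructor
    · filter_upwards with τ
      exact (hprod τ).const_mul (h τ)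
    · refine ((hh_int.abs.mul_const (γ * ∫ t : ℝ, x t ^ 2)).mono'
        (hF_meas.norm.integral_prod_right') ?_)
      filter_upwards with τ
      rw [Real.norm_eq_abs, abs_of_nonneg (integral_nonneg fun t => norm_nonneg _)]
      exact hnorm_bd τ
  -- identification of the integrand
  have hpointwise : ∀ t : ℝ,
      (x t - ∫ τ : ℝ, h τ * x (t - τ)) * φ (x t)
        = x t * φ (x t) - ∫ τ : ℝ, F (τ, t) := by
    intro t
    have : (∫ τ : ℝ, h τ * x (t - τ)) * φ (x t) = ∫ τ : ℝ, F (τ, t) := by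
      rw [← integral_mul_const]
      congr 1 with τ
      simp only [hFdef]
      ring
    rw [sub_mul, this]
  have hG_int : Integrable (fun t => ∫ τ : ℝ, F (τ, t)) := hF_int.integral_prod_right
  have hswap : (∫ t : ℝ, ∫ τ : ℝ, F (τ, t)) = ∫ τ : ℝ, ∫ t : ℝ, F (τ, t) :=
    (integral_integral_swap (f := fun τ t => F (τ, t)) hF_int).symm
  have hinner : ∀ τ : ℝ, (∫ t : ℝ, F (τ, t)) = h τ * I τ := by
    intro τ
    rw [hIdef, ← integral_const_mul]
  have hτ_int : Integrable (fun τ => h τ * I τ) := by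
    have := hF_int.integral_prod_left
    simpa only [hinner] using this
  have hfinal : (∫ τ : ℝ, h τ * I τ) ≤ K := by
    have hmono' : (∫ τ : ℝ, h τ * I τ) ≤ ∫ τ : ℝ, |h τ| * K := by
      refine integral_mono hτ_int (hh_int.abs.mul_const K) ?_
      intro τ
      calc h τ * I τ ≤ |h τ * I τ| := le_abs_self _
        _ = |h τ| * |I τ| := abs_mul _ _
        _ ≤ |h τ| * K := mul_le_mul_of_nonneg_left (hI_bound τ) (abs_nonneg _)
    have : (∫ τ : ℝ, |h τ| * K) = (∫ τ : ℝ, |h τ|) * K := integral_mul_const _ _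
    rw [this] at hmono'
    have h0 : (0:ℝ) ≤ ∫ τ : ℝ, |h τ| :=
      integral_nonneg (μ := (volume : Measure ℝ)) (fun τ : ℝ => abs_nonneg (h τ))
    nlinarith
  have hIeq : (∫ τ : ℝ, ∫ t : ℝ, F (τ, t)) = ∫ τ : ℝ, h τ * I τ :=
    integral_congr_ae (Filter.Eventually.of_forall hinner)
  calc (∫ t : ℝ, (x t - ∫ τ : ℝ, h τ * x (t - τ)) * φ (x t))
      = ∫ t : ℝ, (x t * φ (x t) - ∫ τ : ℝ, F (τ, t)) :=
        integral_congr_ae (Filter.Eventually.of_forall hpointwise)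
    _ = K - ∫ t : ℝ, ∫ τ : ℝ, F (τ, t) := integral_sub hxφ hG_int
    _ = K - ∫ τ : ℝ, h τ * I τ := by rw [hswap, hIeq]
    _ ≥ 0 := by linarith
end

section
/- (Zames–Falb time-domain IQC for slope-restricted nonlinearities.) Let α > 0 and let φ : ℝ → ℝ satisfy φ(0) = 0 and the slope restriction 0 ≤ (φ(x) − φ(y))/(x − y) ≤ α for all x ≠ y. Let v : ℝ → ℝ be measurable and square-integrable over ℝ, and let h : ℝ → ℝ be integrable with h(t) ≥ 0 for all t and ∫ |h| ≤ 1. Define u(t) = v(t) − φ(v(t))/α. Then ∫_{−∞}^{∞} (u(t) − (h ⋆ u)(t)) φ(v(t)) dt ≥ 0, where (h ⋆ u)(t) = ∫_{−∞}^{∞} h(τ) u(t − τ) dτ denotes convolution. -/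
open MeasureTheory

/-- product of two L² real functions is integrable -/
lemma zf_l2_mul {f g : ℝ → ℝ} (hf : MemLp f 2 (volume : Measure ℝ))
    (hg : MemLp g 2 (volume : Measure ℝ)) :
    Integrable (fun t => f t * g t) (volume : Measure ℝ) := by
  refine ((hf.integrable_sq.add hg.integrable_sq).div_const 2).mono'
    (hf.1.mul hg.1) ?_
  filter_upwards with t
  simp only [Pi.add_apply, Real.norm_eq_abs, abs_mul]
  nlinarith [sq_nonneg (|f t| - |g t|), sq_abs (f t), sq_abs (g t),
    abs_nonneg (f t), abs_nonneg (g t)]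

/-- triangle area lower bound for an integral -/
lemma zf_tri {α : ℝ} (hα : 0 < α) {a b p : ℝ} (hab : a ≤ b) (hp : 0 ≤ p)
    {f : ℝ → ℝ} (hfc : Continuous f) (hf0 : ∀ s ∈ Set.Icc a b, 0 ≤ f s)
    (hlb : ∀ s ∈ Set.Icc a b, p - α * (s - a) ≤ f s) (hpb : p ≤ α * (b - a)) :
    p ^ 2 / (2 * α) ≤ ∫ s in a..b, f s := by
  set c := a + p / α with hc
  have hac : a ≤ c := by
    have : 0 ≤ p / α := div_nonneg hp hα.le
    rw [hc]; linarith
  have hcb : c ≤ b := by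
    have : p / α ≤ b - a := (div_le_iff₀' hα).mpr (by linarith [hpb])
    rw [hc]; linarith
  have hint1 : IntervalIntegrable f volume a c := hfc.intervalIntegrable _ _
  have hint2 : IntervalIntegrable f volume c b := hfc.intervalIntegrable _ _
  have hsplit : (∫ s in a..b, f s) = (∫ s in a..c, f s) + ∫ s in c..b, f s :=
    (intervalIntegral.integral_add_adjacent_intervals hint1 hint2).symm
  have h2 : 0 ≤ ∫ s in c..b, f s := by
    apply intervalIntegral.integral_nonneg hcb
    intro s hs
    exact hf0 s ⟨le_trans hac hs.1, hs.2⟩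
  have hlin : (∫ s in a..c, (p - α * (s - a))) = p ^ 2 / (2 * α) := by
    have he : (fun s => p - α * (s - a)) = fun s => (p + α * a) - α * s := by
      funext s; ring
    rw [he, intervalIntegral.integral_sub intervalIntegrable_const
      ((by fun_prop : Continuous fun s : ℝ => α * s).intervalIntegrable _ _),
      intervalIntegral.integral_const, intervalIntegral.integral_const_mul, integral_id]
    simp only [smul_eq_mul, hc]
    field_simp
    ring
  have h1 : p ^ 2 / (2 * α) ≤ ∫ s in a..c, f s := by
    rw [← hlin]
    apply intervalIntegral.integral_mono_on hac
      ((continuous_const.sub (continuous_const.mul (continuous_id.sub continuous_const))).intervalIntegrable _ _)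
      hint1
    intro s hs
    exact hlb s ⟨hs.1, le_trans hs.2 hcb⟩
  linarith [hsplit, h1, h2]

section
variable {α : ℝ} {φ : ℝ → ℝ}

lemma zf_sq (hslope : ∀ x y : ℝ,
      0 ≤ (φ x - φ y) * (x - y) ∧ (φ x - φ y) * (x - y) ≤ α * (x - y) ^ 2)
    (x y : ℝ) : (φ x - φ y) ^ 2 ≤ α * ((φ x - φ y) * (x - y)) := by
  rcases eq_or_ne x y with rfl | hxy
  · simp
  · obtain ⟨h1, h2⟩ := hslope x y
    have hd0 : x - y ≠ 0 := sub_ne_zero.mpr hxy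
    have hd : (x - y) ^ 2 > 0 := by positivity
    nlinarith [mul_le_mul_of_nonneg_right h2 h1]

lemma zf_lip (hα : 0 < α) (hslope : ∀ x y : ℝ,
      0 ≤ (φ x - φ y) * (x - y) ∧ (φ x - φ y) * (x - y) ≤ α * (x - y) ^ 2)
    (x y : ℝ) : |φ x - φ y| ≤ α * |x - y| := by
  have h1 := zf_sq hslope x y
  have h2 := (hslope x y).2
  have h3 : (φ x - φ y) ^ 2 ≤ α ^ 2 * (x - y) ^ 2 := by nlinarith
  have h4 : (φ x - φ y) ^ 2 ≤ (α * |x - y|) ^ 2 := by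
    rw [mul_pow, sq_abs]; linarith
  exact abs_le_of_sq_le_sq h4 (by positivity)

lemma zf_mono_s15 (hα : 0 < α) (hslope : ∀ x y : ℝ,
      0 ≤ (φ x - φ y) * (x - y) ∧ (φ x - φ y) * (x - y) ≤ α * (x - y) ^ 2)
    {x y : ℝ} (hxy : x ≤ y) : φ x ≤ φ y := by
  rcases eq_or_lt_of_le hxy with rfl | hlt
  · exact le_refl _
  · have h1 := (hslope y x).1
    nlinarith

lemma zf_cont (hα : 0 < α) (hslope : ∀ x y : ℝ,
      0 ≤ (φ x - φ y) * (x - y) ∧ (φ x - φ y) * (x - y) ≤ α * (x - y) ^ 2) :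
    Continuous φ := by
  apply LipschitzWith.continuous (K := ⟨α, hα.le⟩)
  apply LipschitzWith.of_dist_le_mul
  intro x y
  rw [Real.dist_eq, Real.dist_eq]; exact zf_lip hα hslope x y


lemma zf_key1 (hα : 0 < α) (hslope : ∀ x y : ℝ,
      0 ≤ (φ x - φ y) * (x - y) ∧ (φ x - φ y) * (x - y) ≤ α * (x - y) ^ 2)
    (x y : ℝ) :
    (φ x - φ y) ^ 2 / (2 * α) ≤
      φ x * (x - y) - ((∫ s in (0:ℝ)..x, φ s) - ∫ s in (0:ℝ)..y, φ s) := by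
  have hcont := zf_cont hα hslope
  have hdiff : ((∫ s in (0:ℝ)..x, φ s) - ∫ s in (0:ℝ)..y, φ s) = ∫ s in y..x, φ s :=
    intervalIntegral.integral_interval_sub_left (hcont.intervalIntegrable _ _)
      (hcont.intervalIntegrable _ _)
  rw [hdiff]
  rcases le_total y x with hyx | hxy
  · have hre : φ x * (x - y) - ∫ s in y..x, φ s = ∫ s in y..x, (φ x - φ s) := by
      rw [intervalIntegral.integral_sub intervalIntegrable_const
        (hcont.intervalIntegrable _ _), intervalIntegral.integral_const]
      simp [smul_eq_mul]; ring
    rw [hre]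
    apply zf_tri hα hyx (sub_nonneg.mpr (zf_mono_s15 hα hslope hyx))
      (continuous_const.sub hcont)
    · intro s hs
      exact sub_nonneg.mpr (zf_mono_s15 hα hslope hs.2)
    · intro s hs
      have := (abs_le.mp (zf_lip hα hslope s y)).2
      rw [abs_of_nonneg (by linarith [hs.1] : (0:ℝ) ≤ s - y)] at this
      simp only [Pi.sub_apply]
      linarith
    · have := (abs_le.mp (zf_lip hα hslope x y)).2
      rw [abs_of_nonneg (by linarith : (0:ℝ) ≤ x - y)] at this
      linarith
  · have hre : φ x * (x - y) - ∫ s in y..x, φ s = ∫ s in x..y, (φ s - φ x) := by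
      rw [intervalIntegral.integral_symm x y,
        intervalIntegral.integral_sub (hcont.intervalIntegrable _ _) intervalIntegrable_const,
        intervalIntegral.integral_const]
      simp only [smul_eq_mul]
      ring
    have hcomp : (∫ s in x..y, ((fun r => φ r - φ x) (x + y - s))) = ∫ s in x..y, (φ s - φ x) := by
      rw [intervalIntegral.integral_comp_sub_left (fun r => φ r - φ x) (x + y)]
      norm_num
    rw [hre, ← hcomp]
    have hsq : (φ x - φ y) ^ 2 = (φ y - φ x) ^ 2 := by ring
    rw [hsq]
    apply zf_tri hα hxy (sub_nonneg.mpr (zf_mono_s15 hα hslope hxy))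
      ((hcont.comp (continuous_const.sub continuous_id')).sub continuous_const)
    · intro s hs
      exact sub_nonneg.mpr (zf_mono_s15 hα hslope (by linarith [hs.2] : x ≤ x + y - s))
    · intro s hs
      have := (abs_le.mp (zf_lip hα hslope y (x + y - s))).2
      rw [abs_of_nonneg (by linarith [hs.1] : (0:ℝ) ≤ y - (x + y - s))] at this
      simp only [Pi.sub_apply, Function.comp_apply, id]
      linarith
    · have := (abs_le.mp (zf_lip hα hslope y x)).2
      rw [abs_of_nonneg (by linarith : (0:ℝ) ≤ y - x)] at this
      linarith

lemma zf_key2 (hα : 0 < α) (hslope : ∀ x y : ℝ,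
      0 ≤ (φ x - φ y) * (x - y) ∧ (φ x - φ y) * (x - y) ≤ α * (x - y) ^ 2)
    (x y : ℝ) :
    ((∫ s in (0:ℝ)..x, φ s) - φ x ^ 2 / (2 * α)) -
      ((∫ s in (0:ℝ)..y, φ s) - φ y ^ 2 / (2 * α)) ≤
      φ x * ((x - φ x / α) - (y - φ y / α)) := by
  have h1 := zf_key1 hα hslope x y
  set A := ∫ s in (0:ℝ)..x, φ s
  set B := ∫ s in (0:ℝ)..y, φ s
  have key : φ x * ((x - φ x / α) - (y - φ y / α)) =
      (φ x * (x - y) - (A - B)) - (φ x - φ y) ^ 2 / (2 * α)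
        + ((A - φ x ^ 2 / (2 * α)) - (B - φ y ^ 2 / (2 * α))) := by
    field_simp
    ring
  linarith

end

noncomputable def zfG (α : ℝ) (φ : ℝ → ℝ) (σ : ℝ) : ℝ :=
  (∫ s in (0:ℝ)..σ, φ s) - φ σ ^ 2 / (2 * α)

theorem zames_falb_iqc_slope_restricted (α : ℝ) (hα : α > 0) (φ : ℝ → ℝ)
    (hzero : φ 0 = 0)
    (hslope : ∀ x y : ℝ,
      0 ≤ (φ x - φ y) * (x - y) ∧ (φ x - φ y) * (x - y) ≤ α * (x - y) ^ 2)
    (v : ℝ → ℝ) (hv_meas : Measurable v)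
    (hv : MemLp v 2 (volume : Measure ℝ))
    (h : ℝ → ℝ) (hh_int : Integrable h (volume : Measure ℝ))
    (hh_pos : ∀ t : ℝ, h t ≥ 0)
    (hh_norm : (∫ τ : ℝ, |h τ|) ≤ 1)
    (u : ℝ → ℝ) (hu : ∀ t : ℝ, u t = v t - φ (v t) / α) :
    (∫ t : ℝ, (u t - ∫ τ : ℝ, h τ * u (t - τ)) * φ (v t)) ≥ 0 := by
  have hcont : Continuous φ := zf_cont hα hslope
  have hψm : Measurable (fun t => φ (v t)) := hcont.measurable.comp hv_meas
  have hφ_bound : ∀ σ : ℝ, |φ σ| ≤ α * |σ| := by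
    intro σ
    have := zf_lip hα hslope σ 0
    simpa [hzero] using this
  have hψ2 : MemLp (fun t => φ (v t)) 2 (volume : Measure ℝ) := by
    refine hv.of_le_mul (c := α) hψm.aestronglyMeasurable ?_
    filter_upwards with t
    simpa [Real.norm_eq_abs] using hφ_bound (v t)
  have hufun : u = fun t => v t - α⁻¹ * φ (v t) := by
    funext t
    rw [hu t]
    ring
  have hu2 : MemLp u 2 (volume : Measure ℝ) := by
    rw [hufun]; exact hv.sub (hψ2.const_mul _)
  have hum : Measurable u := by
    rw [hufun]; exact hv_meas.sub (hψm.const_mul _)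
  -- the potential function G
  have hGcont : Continuous (zfG α φ) :=
    (intervalIntegral.continuous_primitive (fun a b => hcont.intervalIntegrable a b) 0).sub
      ((hcont.pow 2).div_const _)
  have hkey2G : ∀ x y : ℝ, zfG α φ x - zfG α φ y ≤
      φ x * ((x - φ x / α) - (y - φ y / α)) := fun x y => zf_key2 hα hslope x y
  have hΦ0 : (∫ s in (0:ℝ)..0, φ s) = 0 := intervalIntegral.integral_same
  have hG0 : zfG α φ 0 = 0 := by simp [zfG, hΦ0, hzero]
  have hGb : ∀ σ : ℝ, |zfG α φ σ| ≤ α * σ ^ 2 := by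
    intro σ
    have h1 := hkey2G σ 0
    have h2 := hkey2G 0 σ
    rw [hG0, hzero] at h1 h2
    norm_num at h1 h2
    have h3 : φ σ * σ ≤ α * σ ^ 2 := by
      have := (hslope σ 0).2
      rw [hzero] at this
      nlinarith [this]
    have hexp : φ σ * (σ - φ σ / α) = (α * (φ σ * σ) - φ σ ^ 2) / α := by
      field_simp
    have h4 : (α * (φ σ * σ) - φ σ ^ 2) / α ≤ φ σ * σ := by
      rw [div_le_iff₀ hα]
      nlinarith [sq_nonneg (φ σ)]
    rw [abs_le]
    constructor
    · nlinarith [h2, mul_nonneg hα.le (sq_nonneg σ)]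
    · nlinarith [h1, hexp, h4, h3]
  have hGm : Measurable fun t => zfG α φ (v t) := hGcont.measurable.comp hv_meas
  have hGv_int : Integrable (fun t => zfG α φ (v t)) volume := by
    refine (hv.integrable_sq.const_mul α).mono' hGm.aestronglyMeasurable ?_
    filter_upwards with t
    simpa [Real.norm_eq_abs] using hGb (v t)
  -- A := ∫ u ψ ≥ 0
  have huψ_int : Integrable (fun t => u t * φ (v t)) volume := zf_l2_mul hu2 hψ2
  have huψ_pos : ∀ t, 0 ≤ u t * φ (v t) := by
    intro t
    have hsq := zf_sq hslope (v t) 0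
    rw [hzero] at hsq
    rw [hu t]
    have key : (v t - φ (v t) / α) * φ (v t) = (α * (φ (v t) * v t) - φ (v t) ^ 2) / α := by
      field_simp
    rw [key]
    exact div_nonneg (by nlinarith) hα.le
  have hA : 0 ≤ ∫ t, u t * φ (v t) := integral_nonneg huψ_pos
  -- shifted integrability
  have hshift2 : ∀ τ : ℝ, MemLp (fun t => u (t - τ)) 2 (volume : Measure ℝ) := fun τ =>
    hu2.comp_measurePreserving (measurePreserving_sub_right volume τ)
  have hIτ_int : ∀ τ : ℝ, Integrable (fun t => u (t - τ) * φ (v t)) volume := fun τ =>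
    zf_l2_mul (hshift2 τ) hψ2
  have hGvτ_int : ∀ τ : ℝ, Integrable (fun t => zfG α φ (v (t - τ))) volume := fun τ =>
    ((measurePreserving_sub_right volume τ).integrable_comp hGv_int.1).mpr hGv_int
  have hGvτ_eq : ∀ τ : ℝ, (∫ t, zfG α φ (v (t - τ))) = ∫ t, zfG α φ (v t) := fun τ =>
    integral_sub_right_eq_self (fun t => zfG α φ (v t)) τ
  -- the crucial per-shift bound
  have hIle : ∀ τ : ℝ, (∫ t, u (t - τ) * φ (v t)) ≤ ∫ t, u t * φ (v t) := by
    intro τ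
    have hmono : ∀ t, u (t - τ) * φ (v t) ≤ u t * φ (v t) - (zfG α φ (v t) - zfG α φ (v (t - τ))) := by
      intro t
      have hk := hkey2G (v t) (v (t - τ))
      rw [hu t, hu (t - τ)]
      have hexp : φ (v t) * ((v t - φ (v t) / α) - (v (t - τ) - φ (v (t - τ)) / α)) =
          (v t - φ (v t) / α) * φ (v t) - (v (t - τ) - φ (v (t - τ)) / α) * φ (v t) := by
        ring
      linarith [hk, hexp]
    have hGdiff : Integrable (fun t => zfG α φ (v t) - zfG α φ (v (t - τ))) volume :=
      hGv_int.sub (hGvτ_int τ)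
    calc (∫ t, u (t - τ) * φ (v t))
        ≤ ∫ t, (u t * φ (v t) - (zfG α φ (v t) - zfG α φ (v (t - τ)))) :=
          integral_mono (hIτ_int τ) (huψ_int.sub hGdiff) hmono
      _ = (∫ t, u t * φ (v t)) - ((∫ t, zfG α φ (v t)) - ∫ t, zfG α φ (v (t - τ))) := by
          rw [integral_sub huψ_int hGdiff, integral_sub hGv_int (hGvτ_int τ)]
      _ = ∫ t, u t * φ (v t) := by rw [hGvτ_eq τ]; ring
  -- joint integrability of the convolution integrand
  have hF : Integrable (fun p : ℝ × ℝ => h p.2 * (u (p.1 - p.2) * φ (v p.1)))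
      (((volume : Measure ℝ)).prod volume) := by
    have hmeas : AEStronglyMeasurable (fun p : ℝ × ℝ => h p.2 * (u (p.1 - p.2) * φ (v p.1)))
        (((volume : Measure ℝ)).prod volume) :=
      hh_int.1.comp_snd.mul ((hum.comp (measurable_fst.sub measurable_snd)).mul
        (hψm.comp measurable_fst)).aestronglyMeasurable
    have k1 : Integrable (fun p : ℝ × ℝ => u (p.1 - p.2) ^ 2 * |h p.2|)
        (((volume : Measure ℝ)).prod volume) := by
      have base : Integrable (fun q : ℝ × ℝ => u q.1 ^ 2 * |h q.2|)
          (((volume : Measure ℝ)).prod volume) := hu2.integrable_sq.mul_prod hh_int.abs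
      exact ((measurePreserving_sub_prod (volume : Measure ℝ) volume).integrable_comp
        base.1).mpr base
    have k2 : Integrable (fun p : ℝ × ℝ => φ (v p.1) ^ 2 * |h p.2|)
        (((volume : Measure ℝ)).prod volume) := hψ2.integrable_sq.mul_prod hh_int.abs
    refine ((k1.add k2).div_const 2).mono' hmeas ?_
    filter_upwards with p
    simp only [Pi.add_apply, Real.norm_eq_abs, abs_mul]
    nlinarith [sq_nonneg (|u (p.1 - p.2)| - |φ (v p.1)|), sq_abs (u (p.1 - p.2)),
      sq_abs (φ (v p.1)), abs_nonneg (h p.2), abs_nonneg (u (p.1 - p.2)),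
      abs_nonneg (φ (v p.1)), mul_nonneg (abs_nonneg (u (p.1 - p.2))) (abs_nonneg (φ (v p.1)))]
  have hinner_int : Integrable (fun t => ∫ τ, h τ * (u (t - τ) * φ (v t))) volume :=
    hF.integral_prod_left
  -- rewrite the goal
  have hgoal_eq : (∫ t : ℝ, (u t - ∫ τ : ℝ, h τ * u (t - τ)) * φ (v t)) =
      (∫ t, u t * φ (v t)) - ∫ t, ∫ τ, h τ * (u (t - τ) * φ (v t)) := by
    rw [← integral_sub huψ_int hinner_int]
    congr 1
    funext t
    rw [sub_mul]
    congr 1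
    rw [← integral_mul_const]
    congr 1
    funext τ
    ring
  -- Fubini
  have hswap : (∫ t, ∫ τ, h τ * (u (t - τ) * φ (v t))) =
      ∫ τ, ∫ t, h τ * (u (t - τ) * φ (v t)) := integral_integral_swap hF
  have hpull : (∫ τ, ∫ t, h τ * (u (t - τ) * φ (v t))) =
      ∫ τ, h τ * ∫ t, u (t - τ) * φ (v t) := by
    congr 1
    funext τ
    rw [integral_const_mul]
  have houter_int : Integrable (fun τ => h τ * ∫ t, u (t - τ) * φ (v t)) volume := by
    have h2 := hF.integral_prod_right
    refine h2.congr ?_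
    filter_upwards with τ
    exact integral_const_mul _ _
  have hBle : (∫ τ, h τ * ∫ t, u (t - τ) * φ (v t)) ≤
      (∫ τ, h τ) * ∫ t, u t * φ (v t) := by
    rw [← integral_mul_const]
    refine integral_mono houter_int (hh_int.mul_const _) fun τ => ?_
    exact mul_le_mul_of_nonneg_left (hIle τ) (hh_pos τ)
  have hh1 : (∫ τ, h τ) ≤ 1 := by
    have : (∫ τ : ℝ, h τ) = ∫ τ : ℝ, |h τ| := by
      congr 1
      funext τ
      rw [abs_of_nonneg (hh_pos τ)]
    rw [this]; exact hh_norm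
  have hh0 : 0 ≤ ∫ τ, h τ := integral_nonneg hh_pos
  have hfinal : (∫ τ, h τ) * (∫ t, u t * φ (v t)) ≤ ∫ t, u t * φ (v t) := by
    nlinarith
  rw [ge_iff_le, hgoal_eq]
  have := hswap
  linarith [hBle, hfinal, hswap, hpull]
end

section
/- (Zames–Falb time-domain IQC for odd slope-restricted nonlinearities.) Let α > 0 and let φ : ℝ → ℝ be odd with φ(0) = 0, satisfying the slope restriction 0 ≤ (φ(x) − φ(y))/(x − y) ≤ α for all x ≠ y. Let v : ℝ → ℝ be measurable and square-integrable over ℝ, and let h : ℝ → ℝ be integrable (not necessarily nonnegative) with ∫ |h| ≤ 1. Define u(t) = v(t) − φ(v(t))/α. Then ∫_{−∞}^{∞} (u(t) − (h ⋆ u)(t)) φ(v(t)) dt ≥ 0, where (h ⋆ u)(t) = ∫_{−∞}^{∞} h(τ) u(t − τ) dτ denotes convolution. -/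
open MeasureTheory

noncomputable def Phi (φ : ℝ → ℝ) (x : ℝ) : ℝ := ∫ s in (0:ℝ)..x, φ s

noncomputable def Fpot (α : ℝ) (φ : ℝ → ℝ) (x : ℝ) : ℝ := Phi φ x - (φ x)^2 / (2*α)

lemma slope_lip {α : ℝ} (hα : 0 < α) {φ : ℝ → ℝ}
    (hslope : ∀ x y : ℝ, 0 ≤ (φ x - φ y) * (x - y) ∧ (φ x - φ y) * (x - y) ≤ α * (x - y) ^ 2) :
    ∀ x y : ℝ, |φ x - φ y| ≤ α * |x - y| := by
  intro x y
  rcases eq_or_ne x y with rfl | hxy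
  · simp
  · obtain ⟨h1, h2⟩ := hslope x y
    have hs2 : 0 < (x - y)^2 := by
      have : x - y ≠ 0 := sub_ne_zero.mpr hxy
      positivity
    have hd2 : (φ x - φ y)^2 ≤ α * ((φ x - φ y) * (x - y)) := by
      nlinarith [mul_le_mul_of_nonneg_left h2 h1]
    have habs : (φ x - φ y)^2 ≤ α * (|φ x - φ y| * |x - y|) := by
      calc (φ x - φ y)^2 ≤ α * ((φ x - φ y) * (x - y)) := hd2
      _ ≤ α * (|φ x - φ y| * |x - y|) := by
          rw [← abs_mul]
          exact mul_le_mul_of_nonneg_left (le_abs_self _) hα.le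
    rcases eq_or_lt_of_le (abs_nonneg (φ x - φ y)) with h0 | h0
    · rw [← h0]; positivity
    · have h3 : |φ x - φ y| * |φ x - φ y| ≤ (α * |x - y|) * |φ x - φ y| := by
        nlinarith [sq_abs (φ x - φ y)]
      exact le_of_mul_le_mul_right h3 h0

lemma slope_mono {φ : ℝ → ℝ} {α : ℝ}
    (hslope : ∀ x y : ℝ, 0 ≤ (φ x - φ y) * (x - y) ∧ (φ x - φ y) * (x - y) ≤ α * (x - y) ^ 2) :
    ∀ x y : ℝ, x ≤ y → φ x ≤ φ y := by
  intro x y hxy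
  rcases eq_or_lt_of_le hxy with rfl | hlt
  · exact le_refl _
  · nlinarith [(hslope x y).1, sq_nonneg (x - y)]

lemma bregman_aux {α : ℝ} (hα : 0 < α) {φ : ℝ → ℝ} (hc : Continuous φ)
    (hmono : ∀ x y : ℝ, x ≤ y → φ x ≤ φ y)
    (hlip : ∀ x y : ℝ, |φ x - φ y| ≤ α * |x - y|)
    {x y : ℝ} (hd : φ x < φ y) :
    φ x * (y - x) + (φ y - φ x)^2/(2*α) ≤ Phi φ y - Phi φ x := by
  obtain ⟨d, hdd⟩ : ∃ d, d = φ y - φ x := ⟨_, rfl⟩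
  have hd0 : 0 < d := by rw [hdd]; linarith
  have hxy : x < y := by
    by_contra hle
    push_neg at hle
    exact absurd (hmono y x hle) (by linarith)
  have hdle : d ≤ α * (y - x) := by
    have h := hlip y x
    rw [abs_of_pos (by linarith : (0:ℝ) < φ y - φ x), abs_of_pos (by linarith : (0:ℝ) < y - x)] at h
    rw [hdd]; exact h
  obtain ⟨c, hcc⟩ : ∃ c, c = y - d/α := ⟨_, rfl⟩
  have hxc : x ≤ c := by
    have : d/α ≤ y - x := by
      rw [div_le_iff₀ hα]; nlinarith
    rw [hcc]; linarith
  have hcy : c ≤ y := by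
    have : 0 < d/α := div_pos hd0 hα
    rw [hcc]; linarith
  have hint : ∀ a b : ℝ, IntervalIntegrable φ volume a b := fun a b => hc.intervalIntegrable a b
  have hsplit : Phi φ y - Phi φ x = (∫ s in x..c, φ s) + (∫ s in c..y, φ s) := by
    rw [intervalIntegral.integral_add_adjacent_intervals (hint x c) (hint c y)]
    unfold Phi
    rw [intervalIntegral.integral_interval_sub_left (hint 0 y) (hint 0 x)]
  have h1 : φ x * (c - x) ≤ ∫ s in x..c, φ s := by
    have := intervalIntegral.integral_mono_on hxc (intervalIntegrable_const (c := φ x))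
      (hint x c) (fun s hs => hmono x s hs.1)
    simpa [smul_eq_mul, mul_comm] using this
  have h2 : (∫ s in c..y, ((φ y - α*y) + α*s)) ≤ ∫ s in c..y, φ s := by
    apply intervalIntegral.integral_mono_on hcy
      (by apply Continuous.intervalIntegrable; continuity) (hint c y)
    intro s hs
    have h := hlip y s
    rw [abs_of_nonneg (by linarith [hs.2] : (0:ℝ) ≤ y - s)] at h
    have := (abs_le.mp h).2
    linarith
  have hcomp : (∫ s in c..y, ((φ y - α*y) + α*s)) = (φ y - α*y)*(y - c) + α*((y^2 - c^2)/2) := by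
    rw [intervalIntegral.integral_add intervalIntegrable_const
      (by apply Continuous.intervalIntegrable; continuity)]
    rw [intervalIntegral.integral_const, intervalIntegral.integral_const_mul, integral_id]
    simp [smul_eq_mul]
    ring
  have hceq : c = y - d/α := hcc
  have hda : d / α * α = d := div_mul_cancel₀ d (ne_of_gt hα)
  rw [hsplit, ← hdd]
  have key : φ x * (c - x) + ((φ y - α*y)*(y - c) + α*((y^2 - c^2)/2))
      = φ x * (y - x) + d^2/(2*α) := by
    rw [hcc, hdd]
    field_simp
    ring
  rw [hcomp] at h2
  linarith [h1, h2, key]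

lemma Phi_even {φ : ℝ → ℝ} (hc : Continuous φ) (hodd : ∀ x : ℝ, φ (-x) = -φ x) (x : ℝ) :
    Phi φ (-x) = Phi φ x := by
  unfold Phi
  have h1 : (∫ s in (0:ℝ)..x, φ (-s)) = ∫ s in (-x)..(-(0:ℝ)), φ s :=
    intervalIntegral.integral_comp_neg φ
  simp only [neg_zero] at h1
  have h2 : (∫ s in (0:ℝ)..x, φ (-s)) = -∫ s in (0:ℝ)..x, φ s := by
    simp_rw [hodd]
    exact intervalIntegral.integral_neg
  rw [h2] at h1
  rw [show (∫ s in (0:ℝ)..(-x), φ s) = -∫ s in (-x)..(0:ℝ), φ s from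
    (intervalIntegral.integral_symm _ _), ← h1]
  ring

lemma bregman {α : ℝ} (hα : 0 < α) {φ : ℝ → ℝ} (hc : Continuous φ)
    (hodd : ∀ x : ℝ, φ (-x) = -φ x)
    (hmono : ∀ x y : ℝ, x ≤ y → φ x ≤ φ y)
    (hlip : ∀ x y : ℝ, |φ x - φ y| ≤ α * |x - y|) :
    ∀ x y : ℝ, φ x * (y - x) + (φ y - φ x)^2/(2*α) ≤ Phi φ y - Phi φ x := by
  intro x y
  have hint : ∀ a b : ℝ, IntervalIntegrable φ volume a b := fun a b => hc.intervalIntegrable a b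
  rcases lt_trichotomy (φ x) (φ y) with hlt | heq | hgt
  · exact bregman_aux hα hc hmono hlip hlt
  · rw [← heq]
    simp only [sub_self]
    have hPhi : Phi φ y - Phi φ x = ∫ s in x..y, φ s := by
      unfold Phi
      rw [intervalIntegral.integral_interval_sub_left (hint 0 y) (hint 0 x)]
    rw [hPhi]
    rcases le_total x y with hxy | hyx
    · have := intervalIntegral.integral_mono_on hxy (intervalIntegrable_const (c := φ x))
        (hint x y) (fun s hs => hmono x s hs.1)
      simp only [intervalIntegral.integral_const, smul_eq_mul] at this
      have h0 : (0:ℝ)^2/(2*α) = 0 := by simp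
      rw [h0]
      linarith [this]
    · have hmono' : ∀ s ∈ Set.Icc y x, φ s ≤ φ x := fun s hs => hmono s x hs.2
      have := intervalIntegral.integral_mono_on hyx (hint y x)
        (intervalIntegrable_const (c := φ x)) hmono'
      simp only [intervalIntegral.integral_const, smul_eq_mul] at this
      rw [intervalIntegral.integral_symm]
      have h0 : (0:ℝ)^2/(2*α) = 0 := by simp
      rw [h0]
      nlinarith [this]
  · have h := bregman_aux hα hc hmono hlip (x := -x) (y := -y)
      (by rw [hodd, hodd]; linarith)
    rw [hodd, hodd, Phi_even hc hodd, Phi_even hc hodd] at h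
    have : -φ x * (-y - -x) = φ x * (y - x) := by ring
    rw [this] at h
    have : (-φ y - -φ x)^2 = (φ y - φ x)^2 := by ring
    rw [this] at h
    exact h

lemma keyP1 {α : ℝ} (hα : 0 < α) {φ : ℝ → ℝ} (hc : Continuous φ)
    (hodd : ∀ x : ℝ, φ (-x) = -φ x)
    (hmono : ∀ x y : ℝ, x ≤ y → φ x ≤ φ y)
    (hlip : ∀ x y : ℝ, |φ x - φ y| ≤ α * |x - y|) :
    ∀ x y : ℝ, φ x * ((y - φ y / α) - (x - φ x / α)) ≤ Fpot α φ y - Fpot α φ x := by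
  intro x y
  have hb := bregman hα hc hodd hmono hlip x y
  unfold Fpot
  have hα' : α ≠ 0 := ne_of_gt hα
  have hid : φ x * ((y - φ y / α) - (x - φ x / α))
      = φ x * (y - x) + (φ y - φ x)^2/(2*α) - ((φ y)^2/(2*α) - (φ x)^2/(2*α)) := by
    field_simp
    ring
  rw [hid]
  linarith [hb]

lemma Fpot_even {α : ℝ} {φ : ℝ → ℝ} (hc : Continuous φ)
    (hodd : ∀ x : ℝ, φ (-x) = -φ x) (x : ℝ) :
    Fpot α φ (-x) = Fpot α φ x := by
  unfold Fpot
  rw [Phi_even hc hodd, hodd]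
  ring_nf

lemma Fpot_zero {α : ℝ} {φ : ℝ → ℝ} (hzero : φ 0 = 0) : Fpot α φ 0 = 0 := by
  unfold Fpot Phi
  rw [hzero, intervalIntegral.integral_same]
  simp

lemma Fpot_nonneg {α : ℝ} (hα : 0 < α) {φ : ℝ → ℝ} (hc : Continuous φ)
    (hodd : ∀ x : ℝ, φ (-x) = -φ x) (hzero : φ 0 = 0)
    (hmono : ∀ x y : ℝ, x ≤ y → φ x ≤ φ y)
    (hlip : ∀ x y : ℝ, |φ x - φ y| ≤ α * |x - y|) (x : ℝ) :
    0 ≤ Fpot α φ x := by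
  have := keyP1 hα hc hodd hmono hlip 0 x
  rw [hzero, Fpot_zero hzero] at this
  simpa using this

lemma Fpot_le {α : ℝ} (hα : 0 < α) {φ : ℝ → ℝ} (hc : Continuous φ)
    (hodd : ∀ x : ℝ, φ (-x) = -φ x) (hzero : φ 0 = 0)
    (hmono : ∀ x y : ℝ, x ≤ y → φ x ≤ φ y)
    (hlip : ∀ x y : ℝ, |φ x - φ y| ≤ α * |x - y|) (x : ℝ) :
    Fpot α φ x ≤ φ x * (x - φ x / α) := by
  have := keyP1 hα hc hodd hmono hlip x 0
  rw [hzero, Fpot_zero hzero] at this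
  simp only [zero_div, zero_sub, sub_zero] at this
  nlinarith [this]

lemma key_abs {α : ℝ} (hα : 0 < α) {φ : ℝ → ℝ} (hc : Continuous φ)
    (hodd : ∀ x : ℝ, φ (-x) = -φ x) (hzero : φ 0 = 0)
    (hmono : ∀ x y : ℝ, x ≤ y → φ x ≤ φ y)
    (hlip : ∀ x y : ℝ, |φ x - φ y| ≤ α * |x - y|) (x y : ℝ) :
    |φ x * (y - φ y / α)| ≤ Fpot α φ y + (φ x * (x - φ x / α) - Fpot α φ x) := by
  rw [abs_le]
  constructor
  · have h := keyP1 hα hc hodd hmono hlip x (-y)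
    rw [Fpot_even hc hodd, hodd] at h
    have hrw : φ x * ((-y - -φ y / α) - (x - φ x / α))
        = -(φ x * (y - φ y / α)) - φ x * (x - φ x / α) := by ring
    rw [hrw] at h
    linarith
  · have h := keyP1 hα hc hodd hmono hlip x y
    nlinarith [h]

theorem zames_falb_iqc_odd_slope_restricted (α : ℝ) (hα : α > 0) (φ : ℝ → ℝ)
    (hodd : ∀ x : ℝ, φ (-x) = -φ x)
    (hzero : φ 0 = 0)
    (hslope : ∀ x y : ℝ,
      0 ≤ (φ x - φ y) * (x - y) ∧ (φ x - φ y) * (x - y) ≤ α * (x - y) ^ 2)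
    (v : ℝ → ℝ) (hv_meas : Measurable v)
    (hv : MemLp v 2 (volume : Measure ℝ))
    (h : ℝ → ℝ) (hh_int : Integrable h (volume : Measure ℝ))
    (hh_norm : (∫ τ : ℝ, |h τ|) ≤ 1)
    (u : ℝ → ℝ) (hu : ∀ t : ℝ, u t = v t - φ (v t) / α) :
    (∫ t : ℝ, (u t - ∫ τ : ℝ, h τ * u (t - τ)) * φ (v t)) ≥ 0 := by
  have hlip := slope_lip hα hslope
  have hmono := slope_mono hslope
  have hφc : Continuous φ := by
    have : LipschitzWith (Real.toNNReal α) φ := by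
      apply LipschitzWith.of_dist_le_mul
      intro a b
      rw [Real.dist_eq, Real.dist_eq, Real.coe_toNNReal α hα.le]
      exact hlip a b
    exact this.continuous
  -- basic definitions
  set w : ℝ → ℝ := fun t => φ (v t) with hw_def
  set q : ℝ → ℝ := fun t => u t * w t with hq_def
  set G : ℝ → ℝ := fun t => Fpot α φ (v t) with hG_def
  have hu_fun : u = fun t => v t - φ (v t) / α := funext hu
  have hq_app : ∀ t, q t = u t * w t := fun _ => rfl
  have hw_app : ∀ t, w t = φ (v t) := fun _ => rfl
  have hG_app : ∀ t, G t = Fpot α φ (v t) := fun _ => rfl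
  -- measurability
  have hw_meas : Measurable w := hφc.measurable.comp hv_meas
  have hu_meas : Measurable u := by
    rw [hu_fun]; exact hv_meas.sub ((hφc.measurable.comp hv_meas).div_const α)
  -- Lp facts
  have hw2 : MemLp w 2 (volume : Measure ℝ) := by
    apply MemLp.of_le_mul (c := α) hv hw_meas.aestronglyMeasurable
    filter_upwards with t
    have := hlip (v t) 0
    rw [hzero, sub_zero, sub_zero] at this
    simpa [Real.norm_eq_abs] using this
  have hu2 : MemLp u 2 (volume : Measure ℝ) := by
    rw [hu_fun]
    have : (fun t => v t - φ (v t) / α) = fun t => v t - α⁻¹ * φ (v t) := by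
      funext t; rw [div_eq_inv_mul]
    rw [this]
    exact hv.sub (hw2.const_mul α⁻¹)
  have hq_int : Integrable q (volume : Measure ℝ) := by
    apply Integrable.mono' (g := fun t => (u t ^ 2 + w t ^ 2) / 2)
      ((hu2.integrable_sq.add hw2.integrable_sq).div_const 2)
      (hu_meas.mul hw_meas).aestronglyMeasurable
    filter_upwards with t
    rw [Real.norm_eq_abs, Pi.mul_apply, abs_mul]
    nlinarith [sq_nonneg (|u t| - |w t|), sq_abs (u t), sq_abs (w t), abs_nonneg (u t),
      abs_nonneg (w t)]
  -- pointwise nonnegativity and bounds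
  have hsq_bound : ∀ x : ℝ, (φ x)^2 ≤ α * (φ x * x) := by
    intro x
    have hp : 0 ≤ φ x * x := by
      have := (hslope x 0).1
      simpa [hzero] using this
    have hl : |φ x| ≤ α * |x| := by
      have := hlip x 0
      simpa [hzero] using this
    calc (φ x)^2 = |φ x| * |φ x| := by rw [pow_two, ← abs_mul_abs_self]
    _ ≤ (α * |x|) * |φ x| := mul_le_mul_of_nonneg_right hl (abs_nonneg _)
    _ = α * |φ x * x| := by rw [abs_mul]; ring
    _ = α * (φ x * x) := by rw [abs_of_nonneg hp]
  have hq_nonneg : ∀ t, 0 ≤ q t := by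
    intro t
    have h2 := hsq_bound (v t)
    have heq : q t = φ (v t) * v t - (φ (v t))^2 / α := by
      rw [hq_app t, hw_app t, hu t]
      field_simp
    rw [heq, sub_nonneg, div_le_iff₀ hα]
    linarith
  have hq_bound : ∀ t, q t ≤ α * (v t)^2 := by
    intro t
    have h1 := (hslope (v t) 0).2
    simp only [hzero, sub_zero] at h1
    have h2 : 0 ≤ (φ (v t))^2 / α := by positivity
    have heq : q t = φ (v t) * v t - (φ (v t))^2 / α := by
      rw [hq_app t, hw_app t, hu t]
      field_simp
    rw [heq]
    linarith
  -- Fpot facts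
  have hG_nonneg : ∀ t, 0 ≤ G t := fun t => Fpot_nonneg hα hφc hodd hzero hmono hlip (v t)
  have hGq : ∀ t, G t ≤ q t := by
    intro t
    have hle := Fpot_le hα hφc hodd hzero hmono hlip (v t)
    rw [hq_app t, hw_app t, hu t, hG_app t]
    linarith [hle]
  have hFc : Continuous (Fpot α φ) := by
    unfold Fpot
    apply Continuous.sub
    · exact intervalIntegral.continuous_primitive (fun a b => hφc.intervalIntegrable a b) 0
    · exact (hφc.pow 2).div_const (2*α)
  have hG_meas : Measurable G := hFc.measurable.comp hv_meas
  have hG_int : Integrable G (volume : Measure ℝ) := by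
    apply Integrable.mono' (g := fun t => α * (v t)^2) (hv.integrable_sq.const_mul α)
      hG_meas.aestronglyMeasurable
    filter_upwards with t
    rw [Real.norm_eq_abs, abs_of_nonneg (hG_nonneg t)]
    exact (hGq t).trans (hq_bound t)
  have hqG_int : Integrable (fun t => q t - G t) (volume : Measure ℝ) := hq_int.sub hG_int
  -- key pointwise estimate
  have hkey : ∀ t s : ℝ, |u s * w t| ≤ G s + (q t - G t) := by
    intro t s
    have := key_abs hα hφc hodd hzero hmono hlip (v t) (v s)
    have hrw : u s * w t = φ (v t) * (v s - φ (v s) / α) := by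
      rw [hu s, hw_app t]; ring
    have hq2 : q t = φ (v t) * (v t - φ (v t) / α) := by
      rw [hq_app t, hu t, hw_app t]; ring
    rw [hrw, hq2, hG_app t, hG_app s]
    exact this
  -- the double-integral machinery
  set K : ℝ × ℝ → ℝ := fun p => h p.2 * (u (p.1 - p.2) * w p.1) with hK_def
  set B : ℝ × ℝ → ℝ := fun p => |h p.2| * (G (p.1 - p.2) + (q p.1 - G p.1)) with hB_def
  have hB_int : Integrable B ((volume : Measure ℝ).prod (volume : Measure ℝ)) := by
    have hb1 : Integrable (fun p : ℝ × ℝ => G p.1 * |h p.2|)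
        ((volume : Measure ℝ).prod volume) := hG_int.mul_prod hh_int.abs
    have hmp : MeasurePreserving (fun p : ℝ × ℝ => (p.1 - p.2, p.2))
        ((volume : Measure ℝ).prod volume) ((volume : Measure ℝ).prod volume) :=
      measurePreserving_sub_prod volume volume
    have hb1' : Integrable ((fun p : ℝ × ℝ => G p.1 * |h p.2|) ∘ (fun p : ℝ × ℝ => (p.1 - p.2, p.2)))
        ((volume : Measure ℝ).prod volume) :=
      (hmp.integrable_comp hb1.aestronglyMeasurable).mpr hb1
    have hb2 : Integrable (fun p : ℝ × ℝ => (q p.1 - G p.1) * |h p.2|)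
        ((volume : Measure ℝ).prod volume) := hqG_int.mul_prod hh_int.abs
    have hBeq : B = (fun p : ℝ × ℝ => G (p.1 - p.2) * |h p.2|) + fun p : ℝ × ℝ => (q p.1 - G p.1) * |h p.2| := by
      funext p
      show |h p.2| * (G (p.1 - p.2) + (q p.1 - G p.1)) = _
      simp only [Pi.add_apply]
      ring
    rw [hBeq]
    exact hb1'.add hb2
  have hK_asm : AEStronglyMeasurable K ((volume : Measure ℝ).prod (volume : Measure ℝ)) := by
    apply AEStronglyMeasurable.mul
    · exact hh_int.aestronglyMeasurable.comp_snd
    · exact ((hu_meas.comp (measurable_fst.sub measurable_snd)).mul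
        (hw_meas.comp measurable_fst)).aestronglyMeasurable
  have hKB : ∀ p : ℝ × ℝ, |K p| ≤ B p := by
    intro p
    show |h p.2 * (u (p.1 - p.2) * w p.1)| ≤ |h p.2| * (G (p.1 - p.2) + (q p.1 - G p.1))
    rw [abs_mul]
    exact mul_le_mul_of_nonneg_left (hkey p.1 (p.1 - p.2)) (abs_nonneg _)
  have hK_int : Integrable K ((volume : Measure ℝ).prod volume) := by
    apply hB_int.mono' hK_asm
    filter_upwards with p
    rw [Real.norm_eq_abs]
    exact hKB p
  have hcw : ∀ t : ℝ, (∫ τ : ℝ, h τ * u (t - τ)) * w t = ∫ τ : ℝ, K (t, τ) := by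
    intro t
    rw [← integral_mul_const]
    congr 1
    funext τ
    show h τ * u (t - τ) * w t = h τ * (u (t - τ) * w t)
    ring
  have hSint : Integrable (fun t => ∫ τ : ℝ, K (t, τ)) (volume : Measure ℝ) :=
    hK_int.integral_prod_left
  have hBt_int : Integrable (fun t => ∫ τ : ℝ, B (t, τ)) (volume : Measure ℝ) :=
    hB_int.integral_prod_left
  have hsplit : (∫ t : ℝ, (u t - ∫ τ : ℝ, h τ * u (t - τ)) * φ (v t))
      = (∫ t : ℝ, q t) - ∫ t : ℝ, ∫ τ : ℝ, K (t, τ) := by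
    rw [← integral_sub hq_int hSint]
    congr 1
    funext t
    rw [← hcw t, hq_app t, hw_app t]
    ring
  have hmono_int : (∫ t : ℝ, ∫ τ : ℝ, K (t, τ)) ≤ ∫ t : ℝ, ∫ τ : ℝ, B (t, τ) := by
    apply integral_mono_ae hSint hBt_int
    filter_upwards [hK_int.prod_right_ae, hB_int.prod_right_ae] with t hKt hBt
    exact integral_mono hKt hBt fun τ => (le_abs_self _).trans (hKB (t, τ))
  have hswap : (∫ t : ℝ, ∫ τ : ℝ, B (t, τ)) = ∫ τ : ℝ, ∫ t : ℝ, B (t, τ) :=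
    integral_integral_swap hB_int
  have hinner : ∀ τ : ℝ, (∫ t : ℝ, B (t, τ)) = |h τ| * ∫ t : ℝ, q t := by
    intro τ
    have h0 : (∫ t : ℝ, B (t, τ)) = ∫ t : ℝ, |h τ| * (G (t - τ) + (q t - G t)) := rfl
    rw [h0, integral_const_mul]
    congr 1
    rw [integral_add (hG_int.comp_sub_right τ) hqG_int,
      integral_sub_right_eq_self G τ, integral_sub hq_int hG_int]
    ring
  have houter : (∫ τ : ℝ, ∫ t : ℝ, B (t, τ)) = (∫ τ : ℝ, |h τ|) * ∫ t : ℝ, q t := by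
    simp_rw [hinner]
    rw [integral_mul_const]
  have hqint_nonneg : 0 ≤ ∫ t : ℝ, q t := integral_nonneg hq_nonneg
  have hfinal : (∫ τ : ℝ, |h τ|) * (∫ t : ℝ, q t) ≤ ∫ t : ℝ, q t :=
    mul_le_of_le_one_left hqint_nonneg hh_norm
  rw [ge_iff_le, hsplit]
  linarith [hmono_int, hswap.le, hswap.ge, houter.le, houter.ge, hfinal]
end
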